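/- arXiv:1903.10891 — 6 statements merged into one kernel-verified Lean document; each statement's English description precedes it below -/
import Mathlib

section
/- For all integers m ≥ 7 and n ≥ (m-3)(m-1), there exists a red/blue coloring of the edges of the graph K_{(m-1)(n-1)} ⊔ K_{1,(m-2)(n-1)+1} (the complete graph on (m-1)(n-1)+1 vertices with one vertex having exactly n-2 of its incident edges deleted) that contains no red cycle C_n and no blue complete graph K_m. Such a coloring is obtained by taking the red graph to consist of m-2 pairwise vertex-disjoint copies of K_{n-1} together with a further disjoint copy of K_{n-1} joined by a single red edge to the extra vertex, all remaining edges being blue. -/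
open SimpleGraph

/-- `G` contains a cycle of length `n` (as a subgraph). -/
def HasCycleOfLength {V : Type*} (G : SimpleGraph V) (n : ℕ) : Prop :=
  ∃ (v : V) (w : G.Walk v v), w.IsCycle ∧ w.length = n

/-- `K_N ⊔ K_{1,k}` : the complete graph on the vertices `0, …, N-1` together with one
extra vertex (the vertex `N`) joined to exactly `k` vertices of the complete graph
(those with value `< k`). -/
def KStarG (N k : ℕ) : SimpleGraph (Fin (N + 1)) where
  Adj v w := v ≠ w ∧ ((v : ℕ) = N → (w : ℕ) < k) ∧ ((w : ℕ) = N → (v : ℕ) < k)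
  symm := by
    constructor
    intro v w h
    exact ⟨h.1.symm, h.2.2, h.2.1⟩
  loopless := by
    constructor
    intro v h
    exact h.1 rfl

/-- The red graph of the critical colouring: `m-2` pairwise vertex-disjoint copies of
`K_{n-1}` (the blocks `⌊v/(n-1)⌋ = 0, …, m-3`), together with a further disjoint copy of
`K_{n-1}` (the block `⌊v/(n-1)⌋ = m-2`) joined by the single red edge
`{(m-1)(n-1), (m-2)(n-1)}` to the extra vertex `(m-1)(n-1)`. -/
def redCritical (m n : ℕ) : SimpleGraph (Fin ((m - 1) * (n - 1) + 1)) where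
  Adj v w := v ≠ w ∧
    (((v : ℕ) < (m - 1) * (n - 1) ∧ (w : ℕ) < (m - 1) * (n - 1) ∧
        (v : ℕ) / (n - 1) = (w : ℕ) / (n - 1)) ∨
      ((v : ℕ) = (m - 1) * (n - 1) ∧ (w : ℕ) = (m - 2) * (n - 1)) ∨
      ((w : ℕ) = (m - 1) * (n - 1) ∧ (v : ℕ) = (m - 2) * (n - 1)))
  symm := by
    constructor
    intro v w h
    refine ⟨h.1.symm, ?_⟩
    tauto
  loopless := by
    constructor
    intro v h
    exact h.1 rfl


open SimpleGraph

private lemma walk_support_getElem? {V : Type*} {G : SimpleGraph V} :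
    ∀ {u v : V} (p : G.Walk u v) (i : ℕ), i ≤ p.length → p.support[i]? = some (p.getVert i) := by
  intro u v p
  induction p with
  | nil =>
    intro i hi
    simp only [Walk.length_nil, Nat.le_zero] at hi
    subst hi
    simp [Walk.getVert]
  | cons h q ih =>
    intro i hi
    cases i with
    | zero => simp [Walk.support_cons, Walk.getVert_zero]
    | succ j =>
      rw [Walk.support_cons, List.getElem?_cons_succ, Walk.getVert_cons_succ]
      exact ih j (by simpa [Walk.length_cons] using hi)
private lemma redCritical_adj' {m n : ℕ} {v w : Fin ((m - 1) * (n - 1) + 1)} :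
    (redCritical m n).Adj v w ↔ v ≠ w ∧
    (((v : ℕ) < (m - 1) * (n - 1) ∧ (w : ℕ) < (m - 1) * (n - 1) ∧
        (v : ℕ) / (n - 1) = (w : ℕ) / (n - 1)) ∨
      ((v : ℕ) = (m - 1) * (n - 1) ∧ (w : ℕ) = (m - 2) * (n - 1)) ∨
      ((w : ℕ) = (m - 1) * (n - 1) ∧ (v : ℕ) = (m - 2) * (n - 1))) := Iff.rfl

private lemma KStarG_adj' {N k : ℕ} {v w : Fin (N + 1)} :
    (KStarG N k).Adj v w ↔ v ≠ w ∧ ((v : ℕ) = N → (w : ℕ) < k) ∧ ((w : ℕ) = N → (v : ℕ) < k) :=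
  Iff.rfl
/-- For all `m ≥ 7` and `n ≥ (m-3)(m-1)`, there is a red/blue colouring of the edges of
`K_{(m-1)(n-1)} ⊔ K_{1,(m-2)(n-1)+1}` with no red cycle `C_n` and no blue `K_m`; such a
colouring is obtained by taking the red graph to consist of `m-2` pairwise vertex-disjoint
copies of `K_{n-1}` together with a further disjoint copy of `K_{n-1}` joined by a single
red edge to the extra vertex, all remaining edges being blue. -/
theorem kStar_not_arrows_cycle_completeGraph (m n : ℕ) (hm : 7 ≤ m)
    (hn : (m - 3) * (m - 1) ≤ n) :
    redCritical m n ≤ KStarG ((m - 1) * (n - 1)) ((m - 2) * (n - 1) + 1) ∧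
    ¬ HasCycleOfLength (redCritical m n) n ∧
    ¬ ∃ s : Finset (Fin ((m - 1) * (n - 1) + 1)),
        (KStarG ((m - 1) * (n - 1)) ((m - 2) * (n - 1) + 1) \ redCritical m n).IsNClique m s := by
  have h24 : 24 ≤ n := le_trans (Nat.mul_le_mul (by omega : 4 ≤ m - 3) (by omega : 6 ≤ m - 1)) hn
  have hpos : 0 < n - 1 := by omega
  have hNsplit : (m - 2) * (n - 1) + (n - 1) = (m - 1) * (n - 1) := by
    rw [show m - 1 = (m - 2) + 1 from by omega, add_mul, one_mul]
  set N := (m - 1) * (n - 1) with hN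
  have hne0 : (m - 2) * (n - 1) < N := by omega
  have hNdiv : N / (n - 1) = m - 1 := Nat.mul_div_cancel _ hpos
  have hnbr : ∀ x : Fin (N + 1), (redCritical m n).Adj ⟨N, by omega⟩ x →
      (x : ℕ) = (m - 2) * (n - 1) := by
    intro x hx
    rw [redCritical_adj'] at hx
    obtain ⟨hx1, hx2⟩ := hx
    have hval : ((⟨N, by omega⟩ : Fin (N + 1)) : ℕ) = N := rfl
    rcases hx2 with ⟨h1, _, _⟩ | ⟨_, h2⟩ | ⟨h3, _⟩
    · rw [hval] at h1; omega
    · exact h2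
    · exact absurd (Fin.ext (hval.trans h3.symm)) hx1
  refine ⟨?_, ?_, ?_⟩
  · -- red ≤ KStarG
    intro v w hvw
    rw [redCritical_adj'] at hvw
    rw [KStarG_adj']
    obtain ⟨hne', hd⟩ := hvw
    refine ⟨hne', ?_, ?_⟩
    · intro hv
      rcases hd with ⟨h1, _, _⟩ | ⟨_, h2⟩ | ⟨h3, h4⟩ <;> omega
    · intro hw
      rcases hd with ⟨_, h1, _⟩ | ⟨h2, h3⟩ | ⟨_, h4⟩ <;> omega
  · -- no red cycle of length n
    rintro ⟨v, c, hc, hl⟩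
    by_cases hmem : (⟨N, by omega⟩ : Fin (N + 1)) ∈ c.support
    · set c' := c.rotate _ hmem with hc'def
      have hcyc : c'.IsCycle := hc.rotate hmem
      have hrot := (Walk.support_rotate c _ hmem).perm.length_eq
      rw [← hc'def] at hrot
      have l1 : c'.support.length = c'.length + 1 := Walk.length_support _
      have l2 : c.support.length = c.length + 1 := Walk.length_support _
      rw [List.length_tail, List.length_tail] at hrot
      have hlen : c'.length = n := by omega
      have ha : (redCritical m n).Adj ⟨N, by omega⟩ (c'.getVert 1) := by
        have := c'.adj_getVert_succ (i := 0) (by omega)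
        rwa [Walk.getVert_zero] at this
      have hb : (redCritical m n).Adj (c'.getVert (n - 1)) ⟨N, by omega⟩ := by
        have := c'.adj_getVert_succ (i := n - 1) (by omega)
        rw [show n - 1 + 1 = c'.length from by omega] at this
        rwa [Walk.getVert_length] at this
      have e1 : (c'.getVert 1 : ℕ) = (m - 2) * (n - 1) := hnbr _ ha
      have e2 : (c'.getVert (n - 1) : ℕ) = (m - 2) * (n - 1) := hnbr _ hb.symm
      have eeq : c'.getVert 1 = c'.getVert (n - 1) := Fin.ext (by omega)
      have g1 : c'.support[1]? = some (c'.getVert 1) := walk_support_getElem? c' 1 (by omega)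
      have g2 : c'.support[n - 1]? = some (c'.getVert (n - 1)) :=
        walk_support_getElem? c' (n - 1) (by omega)
      have hsupp : c'.support = (⟨N, by omega⟩ : Fin (N + 1)) :: c'.support.tail :=
        Walk.support_eq_cons c'
      have t1 : c'.support.tail[0]? = some (c'.getVert 1) := by
        rw [List.getElem?_tail]
        exact g1
      have t2 : c'.support.tail[n - 2]? = some (c'.getVert (n - 1)) := by
        rw [List.getElem?_tail, show n - 2 + 1 = n - 1 from by omega]
        exact g2
      have hnd : c'.support.tail.Nodup := hcyc.support_nodup
      have hlt : 0 < c'.support.tail.length := by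
        rw [List.length_tail, Walk.length_support]; omega
      have h02 : (0 : ℕ) = n - 2 := (List.getElem?_inj hlt hnd).mp (by rw [t1, t2, eeq])
      omega
    · have hallne : ∀ x ∈ c.support, (x : ℕ) ≠ N := by
        intro x hx hxN
        exact hmem (by rwa [show (⟨N, by omega⟩ : Fin (N + 1)) = x from Fin.ext hxN.symm])
      have hblock : ∀ x ∈ c.support, (x : ℕ) / (n - 1) = (v : ℕ) / (n - 1) := by
        suffices H : ∀ {a b : Fin (N + 1)} (p : (redCritical m n).Walk a b),
            (∀ x ∈ p.support, (x : ℕ) ≠ N) →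
            ∀ x ∈ p.support, (x : ℕ) / (n - 1) = (a : ℕ) / (n - 1) from H c hallne
        intro a b p
        induction p with
        | nil =>
          intro _ x hx
          rw [Walk.support_nil, List.mem_singleton] at hx
          rw [hx]
        | @cons u v' w' h q ih =>
          intro hne2 x hx
          rw [Walk.support_cons] at hx hne2
          have huN : (u : ℕ) ≠ N := hne2 u List.mem_cons_self
          have hvN : (v' : ℕ) ≠ N := hne2 v' (List.mem_cons_of_mem _ q.start_mem_support)
          have hb0 : (v' : ℕ) / (n - 1) = (u : ℕ) / (n - 1) := by
            rw [redCritical_adj'] at h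
            rcases h.2 with ⟨_, _, h1⟩ | ⟨h2, _⟩ | ⟨h3, _⟩
            · exact h1.symm
            · exact absurd h2 huN
            · exact absurd h3 hvN
          rcases List.mem_cons.mp hx with rfl | hx'
          · rfl
          · rw [ih (fun y hy => hne2 y (List.mem_cons_of_mem _ hy)) x hx', hb0]
      have hltN : ∀ x ∈ c.support, (x : ℕ) < N := fun x hx =>
        lt_of_le_of_ne (Nat.lt_succ_iff.mp x.isLt) (hallne x hx)
      set q0 := (v : ℕ) / (n - 1) with hq0
      have hsub : ∀ x ∈ c.support.tail,
          (x : ℕ) ∈ Finset.Ico ((n - 1) * q0) ((n - 1) * q0 + (n - 1)) := by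
        intro x hx
        have hx' : x ∈ c.support := List.mem_of_mem_tail hx
        have h1 := hblock x hx'
        have h2 := Nat.div_add_mod (x : ℕ) (n - 1)
        have h3 : (x : ℕ) % (n - 1) < n - 1 := Nat.mod_lt _ hpos
        rw [h1] at h2
        rw [Finset.mem_Ico]
        omega
      have hnodup : (c.support.tail.map Fin.val).Nodup :=
        hc.support_nodup.map Fin.val_injective
      have hsub' : (c.support.tail.map Fin.val).toFinset ⊆
          Finset.Ico ((n - 1) * q0) ((n - 1) * q0 + (n - 1)) := by
        intro y hy
        rw [List.mem_toFinset, List.mem_map] at hy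
        obtain ⟨x, hx, rfl⟩ := hy
        exact hsub x hx
      have hcard := Finset.card_le_card hsub'
      rw [List.toFinset_card_of_nodup hnodup, List.length_map, List.length_tail,
        Walk.length_support, Nat.card_Ico, hl] at hcard
      omega
  · -- no blue K_m
    rintro ⟨s, hs⟩
    have key : ∀ u ∈ s, ∀ w ∈ s, u ≠ w →
        min ((u : ℕ) / (n - 1)) (m - 2) ≠ min ((w : ℕ) / (n - 1)) (m - 2) := by
      intro u hu w hw huw
      have hadj := hs.1 (Finset.mem_coe.mpr hu) (Finset.mem_coe.mpr hw) huw
      rw [sdiff_adj, KStarG_adj'] at hadj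
      obtain ⟨hK, hR⟩ := hadj
      have hRd : ¬ (((u : ℕ) < N ∧ (w : ℕ) < N ∧ (u : ℕ) / (n - 1) = (w : ℕ) / (n - 1)) ∨
          ((u : ℕ) = N ∧ (w : ℕ) = (m - 2) * (n - 1)) ∨
          ((w : ℕ) = N ∧ (u : ℕ) = (m - 2) * (n - 1))) := fun hd =>
        hR (redCritical_adj'.mpr ⟨huw, hd⟩)
      rcases Nat.lt_or_ge (u : ℕ) N with hu' | hu'
      · rcases Nat.lt_or_ge (w : ℕ) N with hw' | hw'
        · have hne3 : (u : ℕ) / (n - 1) ≠ (w : ℕ) / (n - 1) := fun he =>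
            hRd (Or.inl ⟨hu', hw', he⟩)
          have b1 : (u : ℕ) / (n - 1) < m - 1 := (Nat.div_lt_iff_lt_mul hpos).mpr hu'
          have b2 : (w : ℕ) / (n - 1) < m - 1 := (Nat.div_lt_iff_lt_mul hpos).mpr hw'
          omega
        · have hwN : (w : ℕ) = N := by have := w.isLt; omega
          have hu2 : (u : ℕ) < (m - 2) * (n - 1) + 1 := hK.2.2 hwN
          have hu3 : (u : ℕ) ≠ (m - 2) * (n - 1) := fun he =>
            hRd (Or.inr (Or.inr ⟨hwN, he⟩))
          have b1 : (u : ℕ) / (n - 1) < m - 2 := (Nat.div_lt_iff_lt_mul hpos).mpr (by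
            rw [← hNsplit] at *; omega)
          have b2 : (w : ℕ) / (n - 1) = m - 1 := by rw [hwN]; exact hNdiv
          omega
      · have huN : (u : ℕ) = N := by have := u.isLt; omega
        rcases Nat.lt_or_ge (w : ℕ) N with hw' | hw'
        · have hw2 : (w : ℕ) < (m - 2) * (n - 1) + 1 := hK.2.1 huN
          have hw3 : (w : ℕ) ≠ (m - 2) * (n - 1) := fun he =>
            hRd (Or.inr (Or.inl ⟨huN, he⟩))
          have b1 : (w : ℕ) / (n - 1) < m - 2 := (Nat.div_lt_iff_lt_mul hpos).mpr (by
            rw [← hNsplit] at *; omega)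
          have b2 : (u : ℕ) / (n - 1) = m - 1 := by rw [huN]; exact hNdiv
          omega
        · have hwN : (w : ℕ) = N := by have := w.isLt; omega
          exact absurd (Fin.ext (huN.trans hwN.symm)) huw
    have hle : s.card ≤ (Finset.range (m - 1)).card :=
      Finset.card_le_card_of_injOn (fun v => min ((v : ℕ) / (n - 1)) (m - 2))
        (fun a _ => Finset.mem_range.mpr (Nat.lt_of_le_of_lt (min_le_right _ _) (by omega)))
        (fun a ha b hb h => by
          by_contra hne
          exact key a (Finset.mem_coe.mp ha) b (Finset.mem_coe.mp hb) hne h)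
    rw [hs.2, Finset.card_range] at hle
    omega
end

section
/- Suppose a graph G contains the cycle (u_1, u_2, ..., u_{n-1}, u_1) of length n-1 but no cycle of length n, and let Y = V(G) \ {u_1, ..., u_{n-1}}. If a vertex x ∈ Y is adjacent to u_i and u_j, then u_{i+1}u_{j+1} is not an edge of G. -/
open SimpleGraph

/-- A walk following `f 0, f 1, …, f k`. -/
def walkOfFn {V : Type*} (G : SimpleGraph V) (f : ℕ → V) :
    (k : ℕ) → (h : ∀ t < k, G.Adj (f t) (f (t+1))) → G.Walk (f 0) (f k)
  | 0, _ => SimpleGraph.Walk.nil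
  | k+1, h => (walkOfFn G f k (fun t ht => h t (Nat.lt_succ_of_lt ht))).concat
      (h k (Nat.lt_succ_self k))

theorem walkOfFn_support {V : Type*} {G : SimpleGraph V} (f : ℕ → V) (k : ℕ)
    (h : ∀ t < k, G.Adj (f t) (f (t+1))) :
    (walkOfFn G f k h).support = (List.range (k+1)).map f := by
  induction k with
  | zero => simp [walkOfFn, List.range_succ]
  | succ k ih => simp [walkOfFn, ih, List.range_succ]

theorem walkOfFn_length {V : Type*} {G : SimpleGraph V} (f : ℕ → V) (k : ℕ)
    (h : ∀ t < k, G.Adj (f t) (f (t+1))) :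
    (walkOfFn G f k h).length = k := by
  induction k with
  | zero => rfl
  | succ k ih => simp [walkOfFn, ih]

/-- Suppose `G` contains the cycle `(u_1, u_2, …, u_{n-1}, u_1)` of length `n-1`
(here encoded by an injective map `u : ZMod (n-1) → V` with consecutive vertices
adjacent) but no cycle of length `n`.  If a vertex `x` outside the cycle is adjacent
to `u_i` and `u_j`, then `u_{i+1} u_{j+1}` is not an edge of `G`. -/
theorem no_shifted_edge (n : ℕ) (hn : 4 ≤ n)
    {V : Type*} (G : SimpleGraph V)
    (u : ZMod (n - 1) → V) (hu : Function.Injective u)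
    (hcyc : ∀ i : ZMod (n - 1), G.Adj (u i) (u (i + 1)))
    (hno : ¬ HasCycleOfLength G n)
    (x : V) (hx : x ∉ Set.range u)
    (i j : ZMod (n - 1)) (hi : G.Adj x (u i)) (hj : G.Adj x (u j)) :
    ¬ G.Adj (u (i + 1)) (u (j + 1)) := by
  intro hadj
  have hm : 3 ≤ n - 1 := by omega
  haveI : NeZero (n - 1) := ⟨by omega⟩
  -- i ≠ j
  have hij : i ≠ j := by
    rintro rfl
    exact hadj.ne rfl
  set d : ℕ := (j - i).val with hd
  have hdpos : 0 < d := by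
    rcases Nat.eq_zero_or_pos d with h0 | h0
    · exact absurd ((ZMod.val_eq_zero _).mp h0) (sub_ne_zero.mpr (Ne.symm hij))
    · exact h0
  have hdm : d < n - 1 := ZMod.val_lt _
  have hdc : ((d : ℕ) : ZMod (n - 1)) = j - i := by
    simp [hd, ZMod.natCast_val, ZMod.cast_id]
  -- cast injectivity on [0, m)
  have castinj : ∀ a b : ℕ, a < n - 1 → b < n - 1 → ((a : ZMod (n - 1)) = (b : ZMod (n - 1))) → a = b := by
    intro a b ha hb hab
    have := congrArg ZMod.val hab
    rwa [ZMod.val_cast_of_lt ha, ZMod.val_cast_of_lt hb] at this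
  -- the vertex sequence of the new cycle (without x)
  set g : ℕ → ZMod (n - 1) := fun t => if t < d then j - (t : ℕ) else j + 1 + ((t - d : ℕ) : ZMod (n - 1))
    with hg
  set f : ℕ → V := fun t => u (g t) with hf
  have hadjf : ∀ t < n - 1 - 1, G.Adj (f t) (f (t + 1)) := by
    intro t ht
    rcases lt_trichotomy (t + 1) d with h1 | h1 | h1
    · -- descending part
      have ht' : t < d := by omega
      have e1 : g t = j - (t : ℕ) := by simp [hg, ht']
      have e2 : g (t + 1) = j - ((t : ℕ) + 1) := by
        simp only [hg]; rw [if_pos h1]; push_cast; ring_nf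
      have h3 := (hcyc (j - ((t : ℕ) + 1))).symm
      have e3 : j - ((t : ℕ) + 1) + 1 = j - (t : ℕ) := by ring
      rw [e3] at h3
      simpa [hf, e1, e2] using h3
    · -- the chord
      have ht' : t < d := by omega
      have e1 : g t = i + 1 := by
        simp only [hg, if_pos ht']
        have h4 : (t : ZMod (n - 1)) = (j - i) - 1 := by
          rw [← hdc, ← h1]; push_cast; ring
        rw [h4]; ring
      have e2 : g (t + 1) = j + 1 := by
        simp only [hg]
        rw [if_neg (by omega)]
        have h5 : t + 1 - d = 0 := by omega
        simp [h5]
      simpa [hf, e1, e2] using hadj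
    · -- ascending part
      have ht' : ¬ t < d := by omega
      have e1 : g t = j + 1 + ((t - d : ℕ) : ZMod (n - 1)) := by simp [hg, ht']
      have e2 : g (t + 1) = j + 1 + ((t - d : ℕ) : ZMod (n - 1)) + 1 := by
        simp only [hg]
        rw [if_neg (by omega)]
        have h6 : t + 1 - d = (t - d) + 1 := by omega
        rw [h6]; push_cast; ring
      have h7 := hcyc (j + 1 + ((t - d : ℕ) : ZMod (n - 1)))
      simpa [hf, e1, e2] using h7
  have f0 : f 0 = u j := by simp [hf, hg, hdpos]
  have fm1 : f (n - 1 - 1) = u i := by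
    have hnd : ¬ n - 1 - 1 < d := by omega
    have key : ((n - 1 - 1 - d : ℕ) : ZMod (n - 1)) = i - j - 1 := by
      have hnat : (n - 1 - 1 - d) + d + 1 = n - 1 := by omega
      have h8 := congrArg (Nat.cast : ℕ → ZMod (n - 1)) hnat
      push_cast at h8
      rw [ZMod.natCast_self] at h8
      rw [hdc] at h8
      linear_combination h8
    simp only [hf, hg, if_neg hnd, key]
    ring_nf
  -- injectivity of f on range m
  have ginj : ∀ a ∈ List.range (n - 1), ∀ b ∈ List.range (n - 1), f a = f b → a = b := by
    have main : ∀ a b : ℕ, a < n - 1 → b < n - 1 → a < b → g a ≠ g b := by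
      intro a b ha hb hab heq
      by_cases h1 : a < d <;> by_cases h2 : b < d
      · simp only [hg, if_pos h1, if_pos h2] at heq
        have h9 : (a : ZMod (n - 1)) = (b : ZMod (n - 1)) := by linear_combination -heq
        exact absurd (castinj a b ha hb h9) (by omega)
      · simp only [hg, if_pos h1, if_neg h2] at heq
        have h9 : ((a + 1 + (b - d) : ℕ) : ZMod (n - 1)) = ((0 : ℕ) : ZMod (n - 1)) := by
          push_cast; linear_combination -heq
        have := castinj _ _ (by omega) (by omega) h9
        omega
      · omega
      · simp only [hg, if_neg h1, if_neg h2] at heq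
        have h9 : ((a - d : ℕ) : ZMod (n - 1)) = ((b - d : ℕ) : ZMod (n - 1)) := by
          linear_combination heq
        have := castinj _ _ (by omega) (by omega) h9
        omega
    intro a ha b hb hfab
    rw [List.mem_range] at ha hb
    have hgab : g a = g b := hu hfab
    rcases lt_trichotomy a b with h | h | h
    · exact absurd hgab (main a b ha hb h)
    · exact h
    · exact absurd hgab.symm (main b a hb ha h)
  -- build the walk
  set Q : G.Walk (u j) (u i) := (walkOfFn G f (n - 1 - 1) hadjf).copy f0 fm1 with hQdef
  have hQsupp : Q.support = (List.range (n - 1)).map f := by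
    rw [hQdef, SimpleGraph.Walk.support_copy, walkOfFn_support,
      Nat.sub_add_cancel (by omega : 1 ≤ n - 1)]
  have hQnodup : Q.support.Nodup := by
    rw [hQsupp]
    exact List.Nodup.map_on ginj List.nodup_range
  have hxQ : x ∉ Q.support := by
    rw [hQsupp]
    intro hmem
    obtain ⟨t, _, ht⟩ := List.mem_map.mp hmem
    exact hx ⟨g t, ht⟩
  have hQlen : Q.length = n - 1 - 1 := by
    rw [hQdef, SimpleGraph.Walk.length_copy, walkOfFn_length]
  -- the cycle
  set P : G.Walk (u j) x := Q.concat hi.symm with hPdef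
  have hPpath : P.IsPath := by
    rw [SimpleGraph.Walk.isPath_def, hPdef, SimpleGraph.Walk.support_concat,
      List.nodup_append']
    refine ⟨hQnodup, List.nodup_singleton x, ?_⟩
    intro a ha hb
    rw [List.mem_singleton] at hb
    subst hb
    exact hxQ ha
  have hEdge : s(x, u j) ∉ P.edges := by
    rw [hPdef, SimpleGraph.Walk.edges_concat, List.concat_eq_append]
    intro hmem
    rcases List.mem_append.mp hmem with h1 | h1
    · exact hxQ (SimpleGraph.Walk.fst_mem_support_of_mem_edges Q h1)
    · rw [List.mem_singleton] at h1
      rcases Sym2.eq_iff.mp h1 with ⟨h2, _⟩ | ⟨_, h2⟩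
      · exact hx ⟨i, h2.symm⟩
      · exact hij (hu h2.symm)
  refine hno ⟨x, SimpleGraph.Walk.cons hj P, ?_, ?_⟩
  · exact (SimpleGraph.Walk.cons_isCycle_iff P hj).mpr ⟨hPpath, hEdge⟩
  · simp only [SimpleGraph.Walk.length_cons, hPdef, SimpleGraph.Walk.length_concat, hQlen]
    omega
end

section
/- Suppose a graph G contains the cycle (u_1, u_2, ..., u_{n-1}, u_1) of length n-1 but no cycle of length n, and let Y = V(G) \ {u_1, ..., u_{n-1}}. If a vertex x ∈ Y is adjacent to u_i and u_j, then no vertex x' ∈ Y is adjacent to both u_{i+1} and u_{j+2}. -/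
open SimpleGraph

section Aux
variable {V : Type*} {G : SimpleGraph V} {m : ℕ} {u : ZMod m → V}

def arcWalk (hcyc : ∀ i : ZMod m, G.Adj (u i) (u (i + 1))) (a : ZMod m) :
    (k : ℕ) → G.Walk (u a) (u (a + (k : ZMod m)))
  | 0 => Walk.nil.copy rfl (by simp)
  | (k+1) => ((arcWalk hcyc (a+1) k).cons (hcyc a)).copy rfl
      (congrArg u (by push_cast; ring))

lemma arcWalk_length (hcyc : ∀ i : ZMod m, G.Adj (u i) (u (i + 1))) (a : ZMod m) (k : ℕ) :
    (arcWalk hcyc a k).length = k := by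
  induction k generalizing a with
  | zero => simp [arcWalk]
  | succ k ih => simp [arcWalk, ih]

lemma arcWalk_support (hcyc : ∀ i : ZMod m, G.Adj (u i) (u (i + 1))) (a : ZMod m) (k : ℕ) :
    (arcWalk hcyc a k).support = (List.range (k+1)).map (fun t : ℕ => u (a + (t : ZMod m))) := by
  induction k generalizing a with
  | zero => simp [arcWalk, List.range_succ]
  | succ k ih =>
    rw [List.range_succ_eq_map]
    simp only [arcWalk, Walk.support_copy, Walk.support_cons, ih, List.map_cons, List.map_map]
    congr 1
    · simp
    · apply List.map_congr_left
      intro t _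
      simp only [Function.comp_apply]
      congr 1
      push_cast
      ring

lemma arcWalk_support_subset (hcyc : ∀ i : ZMod m, G.Adj (u i) (u (i + 1))) (a : ZMod m)
    (k : ℕ) : ∀ v ∈ (arcWalk hcyc a k).support, v ∈ Set.range u := by
  rw [arcWalk_support]
  intro v hv
  simp only [List.mem_map, List.mem_range] at hv
  obtain ⟨t, -, rfl⟩ := hv
  exact ⟨_, rfl⟩

lemma natCast_inj_of_lt {t t' : ℕ} (ht : t < m) (ht' : t' < m)
    (h : (t : ZMod m) = (t' : ZMod m)) : t = t' := by
  haveI : NeZero m := ⟨by omega⟩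
  have := congrArg ZMod.val h
  rwa [ZMod.val_cast_of_lt ht, ZMod.val_cast_of_lt ht'] at this

lemma arcWalk_support_nodup (hu : Function.Injective u)
    (hcyc : ∀ i : ZMod m, G.Adj (u i) (u (i + 1))) (a : ZMod m) {k : ℕ} (hk : k < m) :
    (arcWalk hcyc a k).support.Nodup := by
  rw [arcWalk_support]
  refine List.Nodup.map_on ?_ List.nodup_range
  intro t ht t' ht' h
  simp only [List.mem_range] at ht ht'
  have h2 : (t : ZMod m) = (t' : ZMod m) := by
    have := hu h
    exact add_left_cancel this
  exact natCast_inj_of_lt (by omega) (by omega) h2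

lemma insert_cycle (hm : 3 ≤ m) (hu : Function.Injective u)
    (hcyc : ∀ i : ZMod m, G.Adj (u i) (u (i + 1)))
    (x : V) (hx : x ∉ Set.range u) (k : ZMod m)
    (h1 : G.Adj x (u k)) (h2 : G.Adj x (u (k + 1))) :
    HasCycleOfLength G (m + 1) := by
  haveI : NeZero m := ⟨by omega⟩
  haveI : Fact (1 < m) := ⟨by omega⟩
  have hend : u (k + 1 + ((m - 1 : ℕ) : ZMod m)) = u k := by
    congr 1
    have h : ((m - 1 : ℕ) : ZMod m) = -1 := by
      have : ((m - 1 : ℕ) : ZMod m) = (m : ℕ) - 1 := by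
        push_cast [Nat.cast_sub (by omega : 1 ≤ m)]; ring
      rw [this]; simp
    rw [h]; ring
  let arc : G.Walk (u (k+1)) (u k) := (arcWalk hcyc (k+1) (m-1)).copy rfl hend
  have harcsup : ∀ v ∈ arc.support, v ∈ Set.range u := by
    intro v hv
    rw [Walk.support_copy] at hv
    exact arcWalk_support_subset hcyc _ _ v hv
  let p : G.Walk x (u k) := Walk.cons h2 arc
  refine ⟨u k, Walk.cons h1.symm p, ?_, ?_⟩
  · rw [Walk.cons_isCycle_iff]
    constructor
    · apply Walk.IsPath.mk'
      rw [Walk.support_cons, List.nodup_cons]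
      refine ⟨fun hmem => hx (harcsup x hmem), ?_⟩
      rw [Walk.support_copy]
      exact arcWalk_support_nodup hu hcyc _ (by omega)
    · intro hmem
      rw [Walk.edges_cons, List.mem_cons] at hmem
      rcases hmem with heq | hmem
      · rw [Sym2.eq_iff] at heq
        rcases heq with ⟨h', -⟩ | ⟨h', -⟩
        · exact hx ⟨k, h'⟩
        · have := hu h'
          have : (1 : ZMod m) = 0 := by
            have h0 : k + 1 = k + 0 := by rw [add_zero]; exact (hu h').symm
            exact add_left_cancel h0
          exact one_ne_zero this
      · have := Walk.snd_mem_support_of_mem_edges arc hmem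
        exact hx (harcsup x this)
  · simp only [Walk.length_cons, Walk.length_copy, arcWalk_length, p, arc]
    omega

lemma main_cycle (hm : 3 ≤ m) (hu : Function.Injective u)
    (hcyc : ∀ i : ZMod m, G.Adj (u i) (u (i + 1)))
    (x x' : V) (hxx : x ≠ x')
    (hx : x ∉ Set.range u) (hx' : x' ∉ Set.range u) (i j : ZMod m)
    (hij : i ≠ j) (hij1 : i ≠ j + 1)
    (hi : G.Adj x (u i)) (hj : G.Adj x (u j))
    (h1 : G.Adj x' (u (i+1))) (h2 : G.Adj x' (u (j+2))) :
    HasCycleOfLength G (m + 1) := by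
  haveI : NeZero m := ⟨by omega⟩
  set a : ℕ := (j - i - 1).val with ha
  set b : ℕ := (i - j - 2).val with hb
  have hva : ((a : ℕ) : ZMod m) = j - i - 1 := by
    rw [ha, ZMod.natCast_val, ZMod.cast_id]
  have hvb : ((b : ℕ) : ZMod m) = i - j - 2 := by
    rw [hb, ZMod.natCast_val, ZMod.cast_id]
  have hva' : a < m := ZMod.val_lt _
  have hvb' : b < m := ZMod.val_lt _
  -- key arithmetic : a + b = m - 3
  have hbm1 : b ≠ m - 1 := by
    intro hbe
    apply hij1
    have : ((b : ℕ) : ZMod m) = -1 := by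
      rw [hbe]
      have : ((m - 1 : ℕ) : ZMod m) = (m : ℕ) - 1 := by
        push_cast [Nat.cast_sub (by omega : 1 ≤ m)]; ring
      rw [this]; simp
    rw [this] at hvb
    have : i = j + 1 := by linear_combination -hvb
    exact this
  have ham1 : a ≠ m - 1 := by
    intro hae
    apply hij
    have : ((a : ℕ) : ZMod m) = -1 := by
      rw [hae]
      have : ((m - 1 : ℕ) : ZMod m) = (m : ℕ) - 1 := by
        push_cast [Nat.cast_sub (by omega : 1 ≤ m)]; ring
      rw [this]; simp
    rw [this] at hva
    have : i = j := by linear_combination hva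
    exact this
  have hsum : a + b = m - 3 := by
    have h3 : ((a + b : ℕ) : ZMod m) = ((m - 3 : ℕ) : ZMod m) := by
      push_cast [hva, hvb, Nat.cast_sub (by omega : 3 ≤ m)]
      simp
      ring
    have hmod : (a + b) % m = (m - 3) % m := (ZMod.natCast_eq_natCast_iff _ _ _).mp h3
    have hm3 : (m - 3) % m = m - 3 := Nat.mod_eq_of_lt (by omega)
    rcases Nat.lt_or_ge (a + b) m with hlt | hge
    · rw [hm3, Nat.mod_eq_of_lt hlt] at hmod
      exact hmod
    · have h2m : a + b - m < m := by omega
      rw [hm3, Nat.mod_eq_sub_mod hge, Nat.mod_eq_of_lt h2m] at hmod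
      omega
  have hA : a ≤ m - 3 := by omega
  have hB : b ≤ m - 3 := by omega
  -- the two arcs
  let arcB : G.Walk (u (j+2)) (u i) :=
    (arcWalk hcyc (j+2) b).copy rfl (congrArg u (by rw [hvb]; ring))
  let arcA : G.Walk (u (i+1)) (u j) :=
    (arcWalk hcyc (i+1) a).copy rfl (congrArg u (by rw [hva]; ring))
  let Q : G.Walk (u i) (u j) :=
    arcB.reverse.append (Walk.cons h2.symm (Walk.cons h1 arcA))
  let P : G.Walk x (u j) := Walk.cons hi Q
  have hQsup : Q.support =
      (((List.range (b+1)).map (fun t : ℕ => u (j + 2 + (t : ZMod m)))).reverse) ++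
        (x' :: ((List.range (a+1)).map (fun t : ℕ => u (i + 1 + (t : ZMod m))))) := by
    simp only [Q, Walk.support_append, Walk.support_reverse, Walk.support_copy,
      Walk.support_cons, arcWalk_support, arcB, arcA, List.tail_cons]
  -- disjointness of index sets
  have hdisj : ∀ t ≤ b, ∀ s ≤ a, u (j + 2 + (t : ZMod m)) ≠ u (i + 1 + (s : ZMod m)) := by
    intro t ht s hs heq
    have he : j + 2 + (t : ZMod m) = i + 1 + (s : ZMod m) := hu heq
    have hi' : (i : ZMod m) = j + 2 + (b : ZMod m) := by rw [hvb]; ring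
    rw [hi'] at he
    have : (t : ZMod m) = ((1 + b + s : ℕ) : ZMod m) := by
      push_cast
      linear_combination he
    have := natCast_inj_of_lt (by omega) (by omega) this
    omega
  have hBnodup : ((List.range (b+1)).map (fun t : ℕ => u (j + 2 + (t : ZMod m)))).Nodup := by
    refine List.Nodup.map_on ?_ List.nodup_range
    intro t ht t' ht' h
    simp only [List.mem_range] at ht ht'
    exact natCast_inj_of_lt (by omega) (by omega) (add_left_cancel (hu h))
  have hAnodup : ((List.range (a+1)).map (fun t : ℕ => u (i + 1 + (t : ZMod m)))).Nodup := by
    refine List.Nodup.map_on ?_ List.nodup_range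
    intro t ht t' ht' h
    simp only [List.mem_range] at ht ht'
    exact natCast_inj_of_lt (by omega) (by omega) (add_left_cancel (hu h))
  have hQmem : ∀ v ∈ Q.support, v = x' ∨ v ∈ Set.range u := by
    intro v hv
    rw [hQsup] at hv
    simp only [List.mem_append, List.mem_reverse, List.mem_cons, List.mem_map,
      List.mem_range] at hv
    rcases hv with ⟨t, -, rfl⟩ | rfl | ⟨t, -, rfl⟩
    · exact Or.inr ⟨_, rfl⟩
    · exact Or.inl rfl
    · exact Or.inr ⟨_, rfl⟩
  have hxQ : x ∉ Q.support := by
    intro hmem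
    rcases hQmem x hmem with rfl | hr
    · exact hxx rfl
    · exact hx hr
  have hQnodup : Q.support.Nodup := by
    rw [hQsup]
    refine List.Nodup.append (List.nodup_reverse.mpr hBnodup) ?_ ?_
    · rw [List.nodup_cons]
      refine ⟨?_, hAnodup⟩
      intro hmem
      simp only [List.mem_map, List.mem_range] at hmem
      obtain ⟨t, -, heq⟩ := hmem
      exact hx' ⟨_, heq⟩
    · intro v hv hv'
      simp only [List.mem_reverse, List.mem_map, List.mem_range] at hv
      obtain ⟨t, ht, rfl⟩ := hv
      simp only [List.mem_cons, List.mem_map, List.mem_range] at hv'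
      rcases hv' with heq | ⟨s, hs, heq⟩
      · exact hx' ⟨_, heq⟩
      · exact hdisj t (by omega) s (by omega) heq.symm
  refine ⟨u j, Walk.cons hj.symm P, ?_, ?_⟩
  · rw [Walk.cons_isCycle_iff]
    constructor
    · apply Walk.IsPath.mk'
      rw [Walk.support_cons, List.nodup_cons]
      exact ⟨hxQ, hQnodup⟩
    · intro hmem
      rw [Walk.edges_cons, List.mem_cons] at hmem
      rcases hmem with heq | hmem
      · rw [Sym2.eq_iff] at heq
        rcases heq with ⟨h', -⟩ | ⟨h', -⟩
        · exact hx ⟨j, h'⟩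
        · exact hij (hu h').symm
      · exact hxQ (Walk.snd_mem_support_of_mem_edges Q hmem)
  · simp only [Walk.length_cons, Walk.length_append, Walk.length_reverse, Walk.length_copy,
      arcWalk_length, P, Q, arcB, arcA]
    omega
end Aux

/-- Suppose `G` contains the cycle `(u_1, u_2, …, u_{n-1}, u_1)` of length `n-1`
(here encoded by an injective map `u : ZMod (n-1) → V` with consecutive vertices
adjacent) but no cycle of length `n`.  If a vertex `x` outside the cycle is adjacent
to `u_i` and `u_j`, then no vertex `x'` outside the cycle is adjacent to both
`u_{i+1}` and `u_{j+2}`. -/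
theorem no_shifted_common_neighbor (n : ℕ) (hn : 4 ≤ n)
    {V : Type*} (G : SimpleGraph V)
    (u : ZMod (n - 1) → V) (hu : Function.Injective u)
    (hcyc : ∀ i : ZMod (n - 1), G.Adj (u i) (u (i + 1)))
    (hno : ¬ HasCycleOfLength G n)
    (x : V) (hx : x ∉ Set.range u)
    (i j : ZMod (n - 1)) (hi : G.Adj x (u i)) (hj : G.Adj x (u j))
    (x' : V) (hx' : x' ∉ Set.range u) :
    ¬ (G.Adj x' (u (i + 1)) ∧ G.Adj x' (u (j + 2))) := by
  rintro ⟨h1, h2⟩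
  have hm : 3 ≤ n - 1 := by omega
  have hmn : n - 1 + 1 = n := by omega
  apply hno
  rw [← hmn]
  by_cases hxx : x = x'
  · subst hxx
    exact insert_cycle hm hu hcyc x hx i hi h1
  by_cases hij : i = j
  · subst hij
    have h2' : G.Adj x' (u (i + 1 + 1)) := by
      have : i + 2 = i + 1 + 1 := by ring
      rwa [this] at h2
    exact insert_cycle hm hu hcyc x' hx' (i+1) h1 h2'
  by_cases hij1 : i = j + 1
  · subst hij1
    exact insert_cycle hm hu hcyc x hx j hj hi
  exact main_cycle hm hu hcyc x x' hxx hx hx' i j hij hij1 hi hj h1 h2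
end

section
/- Suppose a graph G contains a cycle C of length n-1 but no cycle of length n, the independence number of G equals m-1 where m ≤ (n+2)/2, and Y = {y_1, ..., y_{m-1}} is an independent set of m-1 vertices of G disjoint from V(C). Then the number of edges of G with one endpoint in Y and the other in V(C) is at most (m-1)(m-3). -/
open SimpleGraph

namespace EdgeCycleAux

variable {V : Type*} {G : SimpleGraph V} {L : ℕ}

/-- walk along the cycle going "up" `t` steps -/
def walkUp (u : ZMod L → V) (hcyc : ∀ i, G.Adj (u i) (u (i + 1))) (a : ZMod L) :
    (t : ℕ) → G.Walk (u a) (u (a + t))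
  | 0 => Walk.nil.copy rfl (by norm_num)
  | (t + 1) =>
      (walkUp u hcyc a t).concat (by
        have h := hcyc (a + t)
        have he : (a + (t : ZMod L)) + 1 = a + ((t + 1 : ℕ) : ZMod L) := by push_cast; ring
        rwa [he] at h)

lemma walkUp_support (u : ZMod L → V) (hcyc : ∀ i, G.Adj (u i) (u (i + 1))) (a : ZMod L) :
    ∀ t : ℕ, (walkUp u hcyc a t).support = (List.range (t + 1)).map fun s : ℕ => u (a + s)
  | 0 => by simp [walkUp, List.range_succ]
  | (t + 1) => by
      have hr : List.range (t + 1 + 1) = List.range (t + 1) ++ [t + 1] := List.range_succ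
      rw [walkUp, Walk.support_concat, walkUp_support u hcyc a t, hr, List.map_append]
      push_cast
      simp

lemma walkUp_length (u : ZMod L → V) (hcyc : ∀ i, G.Adj (u i) (u (i + 1))) (a : ZMod L) :
    ∀ t : ℕ, (walkUp u hcyc a t).length = t
  | 0 => by simp [walkUp]
  | (t + 1) => by
      rw [walkUp, Walk.length_concat, walkUp_length u hcyc a t]

/-- the arc of the cycle from `u a` to `u b` (going upward). -/
def arcUp [NeZero L] (u : ZMod L → V) (hcyc : ∀ i, G.Adj (u i) (u (i + 1))) (a b : ZMod L) :
    G.Walk (u a) (u b) :=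
  (walkUp u hcyc a (b - a).val).copy rfl
    (congrArg u (by rw [ZMod.natCast_zmod_val]; ring))

lemma arcUp_support [NeZero L] (u : ZMod L → V) (hcyc : ∀ i, G.Adj (u i) (u (i + 1)))
    (a b : ZMod L) :
    (arcUp u hcyc a b).support = (List.range ((b - a).val + 1)).map fun s : ℕ => u (a + s) := by
  rw [arcUp, Walk.support_copy, walkUp_support]

lemma arcUp_length [NeZero L] (u : ZMod L → V) (hcyc : ∀ i, G.Adj (u i) (u (i + 1)))
    (a b : ZMod L) : (arcUp u hcyc a b).length = (b - a).val := by
  rw [arcUp, Walk.length_copy, walkUp_length]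

lemma mem_range_of_mem_arcSupport [NeZero L] {u : ZMod L → V}
    {hcyc : ∀ i, G.Adj (u i) (u (i + 1))} {a b : ZMod L} {x : V}
    (hx : x ∈ (arcUp u hcyc a b).support) : x ∈ Set.range u := by
  rw [arcUp_support] at hx
  obtain ⟨s, -, rfl⟩ := List.mem_map.1 hx
  exact ⟨_, rfl⟩

lemma natCast_inj_lt {s t : ℕ} (hs : s < L) (ht : t < L) (h : (s : ZMod L) = t) : s = t := by
  haveI : NeZero L := ⟨by omega⟩
  have h2 := congrArg ZMod.val h
  rwa [ZMod.val_cast_of_lt hs, ZMod.val_cast_of_lt ht] at h2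

lemma val_sub_one [NeZero L] {x : ZMod L} (hx : x ≠ 0) : (x - 1).val = x.val - 1 := by
  have h1 : 1 ≤ x.val := Nat.pos_of_ne_zero (fun h => hx ((ZMod.val_eq_zero x).1 h))
  have hee : ((x.val - 1 : ℕ) : ZMod L) = x - 1 := by
    rw [Nat.cast_sub h1, ZMod.natCast_zmod_val, Nat.cast_one]
  rw [← hee, ZMod.val_cast_of_lt (by have := x.val_lt; omega)]

lemma val_neg_ne [NeZero L] {x : ZMod L} (hx : x ≠ 0) : (-x).val = L - x.val := by
  rw [ZMod.neg_val, if_neg hx]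

lemma umap_nodup {u : ZMod L → V} (hu : Function.Injective u) (a : ZMod L) {k : ℕ}
    (hk : k ≤ L) : ((List.range k).map fun s : ℕ => u (a + s)).Nodup := by
  refine List.Nodup.map_on ?_ List.nodup_range
  intro s hs t ht h
  rw [List.mem_range] at hs ht
  exact natCast_inj_lt (by omega) (by omega) (add_left_cancel (hu h))

lemma not_mem_umap {u : ZMod L → V} {x : V} (hx : x ∉ Set.range u) (a : ZMod L) (k : ℕ) :
    x ∉ (List.range k).map fun s : ℕ => u (a + s) := by
  intro h; obtain ⟨s, -, rfl⟩ := List.mem_map.1 h; exact hx ⟨_, rfl⟩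

lemma umap_disjoint {u : ZMod L → V} (hu : Function.Injective u) (a : ZMod L)
    {c k1 k2 : ℕ} (h1 : k1 ≤ c) (h2 : c + k2 ≤ L) :
    ((List.range k1).map fun s : ℕ => u (a + s)).Disjoint
      ((List.range k2).map fun t : ℕ => u ((a + (c : ZMod L)) + t)) := by
  intro x hx1 hx2
  obtain ⟨s, hs, rfl⟩ := List.mem_map.1 hx1
  obtain ⟨t, ht, hxt⟩ := List.mem_map.1 hx2
  rw [List.mem_range] at hs ht
  have he : ((c + t : ℕ) : ZMod L) = (s : ℕ) := by
    have h3 := hu hxt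
    push_cast
    linear_combination h3
  have := natCast_inj_lt (by omega) (by omega) he
  omega

lemma cycleA [NeZero L] (hL : 3 ≤ L) {u : ZMod L → V} (hu : Function.Injective u)
    (hcyc : ∀ i, G.Adj (u i) (u (i + 1))) {yv : V} (hy : yv ∉ Set.range u)
    {i : ZMod L} (h1 : G.Adj yv (u i)) (h2 : G.Adj yv (u (i + 1))) :
    HasCycleOfLength G (L + 1) := by
  haveI : Fact (1 < L) := ⟨by omega⟩
  have h10 : (1 : ZMod L) ≠ 0 := by
    intro h
    have := congrArg ZMod.val h
    rw [ZMod.val_one, ZMod.val_zero] at this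
    omega
  have hne : i ≠ i + 1 := by
    intro h
    nth_rewrite 1 [← add_zero i] at h
    exact h10 (add_left_cancel h).symm
  have hval : (i - (i + 1)).val = L - 1 := by
    have he : i - (i + 1) = -1 := by ring
    rw [he, val_neg_ne (by exact h10), ZMod.val_one]
  set p : G.Walk (u (i + 1)) yv := (arcUp u hcyc (i + 1) i).concat h1.symm with hp
  refine ⟨yv, Walk.cons h2 p, ?_, ?_⟩
  · rw [Walk.cons_isCycle_iff]
    constructor
    · rw [Walk.isPath_def, hp, Walk.support_concat, arcUp_support]
      refine List.Nodup.append (umap_nodup hu _ (by omega)) (List.nodup_singleton _) ?_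
      intro x hx hx2
      rw [List.mem_singleton] at hx2
      subst hx2
      exact not_mem_umap hy _ _ hx
    · intro hmem
      rw [hp, Walk.edges_concat, List.concat_eq_append, List.mem_append,
        List.mem_singleton] at hmem
      rcases hmem with hmem | hmem
      · exact hy (mem_range_of_mem_arcSupport
          ((arcUp u hcyc (i + 1) i).fst_mem_support_of_mem_edges hmem))
      · rw [Sym2.eq_iff] at hmem
        rcases hmem with ⟨h3, -⟩ | ⟨-, h4⟩
        · exact hy ⟨i, h3.symm⟩
        · exact hne (hu h4).symm
  · rw [Walk.length_cons, hp, Walk.length_concat, arcUp_length, hval]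
    omega

lemma cycleB [NeZero L] (hL : 3 ≤ L) {u : ZMod L → V} (hu : Function.Injective u)
    (hcyc : ∀ i, G.Adj (u i) (u (i + 1))) {yv : V} (hy : yv ∉ Set.range u)
    {i j : ZMod L} (hij : i ≠ j) (hij1 : i ≠ j + 1) (hji1 : j ≠ i + 1)
    (h1 : G.Adj yv (u i)) (h2 : G.Adj yv (u j))
    (hch : G.Adj (u (i + 1)) (u (j + 1))) :
    HasCycleOfLength G (L + 1) := by
  haveI : Fact (1 < L) := ⟨by omega⟩
  set D : ℕ := (i - j).val with hD
  have hcast : ((D : ℕ) : ZMod L) = i - j := ZMod.natCast_zmod_val _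
  have hij0 : i - j ≠ 0 := sub_ne_zero.2 hij
  have hji0 : j - i ≠ 0 := sub_ne_zero.2 (Ne.symm hij)
  have hD0 : D ≠ 0 := fun h => hij0 ((ZMod.val_eq_zero _).1 h)
  have hD1 : D ≠ 1 := by
    intro h
    apply hij1
    have : i - j = 1 := by rw [← hcast, h, Nat.cast_one]
    linear_combination this
  have hDL : D < L := ZMod.val_lt _
  have hDL2 : D ≤ L - 2 := by
    rcases Nat.lt_or_ge D (L - 1) with h | h
    · omega
    · exfalso
      have hDe : D = L - 1 := by omega
      apply hji1
      have : i - j = -1 := by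
        rw [← hcast, hDe, Nat.cast_sub (by omega), ZMod.natCast_self, Nat.cast_one]
        ring
      linear_combination -this
  have hval1 : (i - (j + 1)).val = D - 1 := by
    have he : i - (j + 1) = (i - j) - 1 := by ring
    rw [he, val_sub_one hij0]
  have hval2 : (j - (i + 1)).val = L - D - 1 := by
    have he : j - (i + 1) = (j - i) - 1 := by ring
    have hn : (j - i).val = L - D := by
      have he2 : j - i = -(i - j) := by ring
      rw [he2, val_neg_ne hij0]
    rw [he, val_sub_one hji0, hn]
  set arc1 := arcUp u hcyc (j + 1) i with harc1
  set arc2 := arcUp u hcyc (i + 1) j with harc2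
  have hA1 : arc1.support = (List.range D).map fun s : ℕ => u ((j + 1) + s) := by
    rw [harc1, arcUp_support, hval1, show D - 1 + 1 = D by omega]
  have hA2 : arc2.support
      = (List.range (L - D)).map fun t : ℕ => u (((j + 1) + (D : ZMod L)) + t) := by
    have hbase : (i + 1 : ZMod L) = (j + 1) + ((D : ℕ) : ZMod L) := by
      rw [hcast]; ring
    rw [harc2, arcUp_support, hval2, show L - D - 1 + 1 = L - D by omega, hbase]
  set p : G.Walk (u i) yv :=
    arc1.reverse.append (Walk.cons hch.symm (arc2.concat h2.symm)) with hp
  refine ⟨yv, Walk.cons h1 p, ?_, ?_⟩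
  · rw [Walk.cons_isCycle_iff]
    constructor
    · rw [Walk.isPath_def, hp, Walk.support_append, Walk.support_reverse,
        Walk.support_cons, List.tail_cons, Walk.support_concat, hA1, hA2]
      refine List.Nodup.append (List.nodup_reverse.2 (umap_nodup hu _ (by omega))) ?_ ?_
      · refine List.Nodup.append (umap_nodup hu _ (by omega)) (List.nodup_singleton _) ?_
        intro x hx hx2
        rw [List.mem_singleton] at hx2
        subst hx2
        exact not_mem_umap hy _ _ hx
      · intro x hx hx2
        rw [List.mem_reverse] at hx
        rw [List.mem_append, List.mem_singleton] at hx2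
        rcases hx2 with hx2 | rfl
        · exact umap_disjoint hu (j + 1) (le_refl D) (by omega) hx hx2
        · exact not_mem_umap hy _ _ hx
    · intro hmem
      rw [hp, Walk.edges_append, Walk.edges_reverse, Walk.edges_cons, Walk.edges_concat,
        List.concat_eq_append, List.mem_append, List.mem_reverse, List.mem_cons,
        List.mem_append, List.mem_singleton] at hmem
      rcases hmem with hmem | hmem | hmem | hmem
      · exact hy (mem_range_of_mem_arcSupport (arc1.fst_mem_support_of_mem_edges hmem))
      · rw [Sym2.eq_iff] at hmem
        rcases hmem with ⟨h3, -⟩ | ⟨h3, -⟩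
        · exact hy ⟨j + 1, h3.symm⟩
        · exact hy ⟨i + 1, h3.symm⟩
      · exact hy (mem_range_of_mem_arcSupport (arc2.fst_mem_support_of_mem_edges hmem))
      · rw [Sym2.eq_iff] at hmem
        rcases hmem with ⟨h3, -⟩ | ⟨-, h4⟩
        · exact hy ⟨j, h3.symm⟩
        · exact hij (hu h4)
  · rw [Walk.length_cons, hp, Walk.length_append, Walk.length_reverse, Walk.length_cons,
      Walk.length_concat, harc1, harc2, arcUp_length, arcUp_length, hval1, hval2]
    omega

lemma cycleC [NeZero L] (hL : 3 ≤ L) {u : ZMod L → V} (hu : Function.Injective u)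
    (hcyc : ∀ i, G.Adj (u i) (u (i + 1))) {yv yv' : V} (hyy' : yv ≠ yv')
    (hy : yv ∉ Set.range u) (hy' : yv' ∉ Set.range u)
    {i j : ZMod L} (hij : i ≠ j) (hij1 : i ≠ j + 1) (hji1 : j ≠ i + 1)
    (h1 : G.Adj yv (u i)) (h2 : G.Adj yv (u j))
    (h3 : G.Adj yv' (u (i + 1))) (h4 : G.Adj yv' (u (j + 2))) :
    HasCycleOfLength G (L + 1) := by
  haveI : Fact (1 < L) := ⟨by omega⟩
  have hv2 : (2 : ZMod L).val = 2 := by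
    rw [show (2 : ZMod L) = ((2 : ℕ) : ZMod L) by push_cast; ring,
      ZMod.val_cast_of_lt (by omega)]
  have h20 : (2 : ZMod L) ≠ 0 := by
    intro h
    have := congrArg ZMod.val h
    rw [hv2, ZMod.val_zero] at this
    omega
  set D : ℕ := (j - i).val with hD
  have hcast : ((D : ℕ) : ZMod L) = j - i := ZMod.natCast_zmod_val _
  have hji0 : j - i ≠ 0 := sub_ne_zero.2 (Ne.symm hij)
  have hD0 : D ≠ 0 := fun h => hji0 ((ZMod.val_eq_zero _).1 h)
  have hD1 : D ≠ 1 := by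
    intro h
    apply hji1
    have : j - i = 1 := by rw [← hcast, h, Nat.cast_one]
    linear_combination this
  have hDL : D < L := ZMod.val_lt _
  have hDL2 : D ≤ L - 2 := by
    rcases Nat.lt_or_ge D (L - 1) with h | h
    · omega
    · exfalso
      have hDe : D = L - 1 := by omega
      apply hij1
      have : j - i = -1 := by
        rw [← hcast, hDe, Nat.cast_sub (by omega), ZMod.natCast_self, Nat.cast_one]
        ring
      linear_combination -this
  have hval1 : (j - (i + 1)).val = D - 1 := by
    have he : j - (i + 1) = (j - i) - 1 := by ring
    rw [he, val_sub_one hji0]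
  have hval2 : (i - (j + 2)).val = L - D - 2 := by
    rcases Nat.eq_or_lt_of_le hDL2 with hDe | hDlt
    · have : i - (j + 2) = 0 := by
        have : j - i = -2 := by
          rw [← hcast, hDe, Nat.cast_sub (by omega), ZMod.natCast_self]
          push_cast
          ring
        linear_combination -this
      rw [this, ZMod.val_zero]
      omega
    · have hne : (j - i) + 2 ≠ 0 := by
        intro h
        have : j - i = -2 := by linear_combination h
        have : D = L - 2 := by
          rw [hD, this, val_neg_ne h20, hv2]
        omega
      have he : i - (j + 2) = -((j - i) + 2) := by ring
      rw [he, val_neg_ne hne, ZMod.val_add_of_lt (by rw [← hD, hv2]; omega), ← hD, hv2]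
      omega
  set arc1 := arcUp u hcyc (i + 1) j with harc1
  set arc2 := arcUp u hcyc (j + 2) i with harc2
  have hA1 : arc1.support = (List.range D).map fun s : ℕ => u ((i + 1) + s) := by
    rw [harc1, arcUp_support, hval1, show D - 1 + 1 = D by omega]
  have hA2 : arc2.support
      = (List.range (L - D - 1)).map fun t : ℕ => u (((i + 1) + ((D + 1 : ℕ) : ZMod L)) + t) := by
    have hbase : (j + 2 : ZMod L) = (i + 1) + ((D + 1 : ℕ) : ZMod L) := by
      push_cast
      rw [hcast]
      ring
    rw [harc2, arcUp_support, hval2, show L - D - 2 + 1 = L - D - 1 by omega, hbase]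
  set p : G.Walk (u j) yv :=
    arc1.reverse.append (Walk.cons h3.symm (Walk.cons h4 (arc2.concat h1.symm))) with hp
  refine ⟨yv, Walk.cons h2 p, ?_, ?_⟩
  · rw [Walk.cons_isCycle_iff]
    constructor
    · rw [Walk.isPath_def, hp, Walk.support_append, Walk.support_reverse,
        Walk.support_cons, Walk.support_cons, List.tail_cons, Walk.support_concat, hA1, hA2]
      refine List.Nodup.append (List.nodup_reverse.2 (umap_nodup hu _ (by omega))) ?_ ?_
      · rw [List.nodup_cons]
        constructor
        · rw [List.mem_append, List.mem_singleton]
          rintro (hmem | rfl)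
          · exact not_mem_umap hy' _ _ hmem
          · exact hyy' rfl
        · refine List.Nodup.append (umap_nodup hu _ (by omega)) (List.nodup_singleton _) ?_
          intro x hx hx2
          rw [List.mem_singleton] at hx2
          subst hx2
          exact not_mem_umap hy _ _ hx
      · intro x hx hx2
        rw [List.mem_reverse] at hx
        rw [List.mem_cons, List.mem_append, List.mem_singleton] at hx2
        rcases hx2 with rfl | hx2 | rfl
        · exact not_mem_umap hy' _ _ hx
        · exact umap_disjoint hu (i + 1) (by omega) (by omega) hx hx2
        · exact not_mem_umap hy _ _ hx
    · intro hmem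
      rw [hp, Walk.edges_append, Walk.edges_reverse, Walk.edges_cons, Walk.edges_cons,
        Walk.edges_concat, List.concat_eq_append, List.mem_append, List.mem_reverse,
        List.mem_cons, List.mem_cons, List.mem_append, List.mem_singleton] at hmem
      rcases hmem with hmem | hmem | hmem | hmem | hmem
      · exact hy (mem_range_of_mem_arcSupport (arc1.fst_mem_support_of_mem_edges hmem))
      · rw [Sym2.eq_iff] at hmem
        rcases hmem with ⟨h5, -⟩ | ⟨h5, -⟩
        · exact hy ⟨i + 1, h5.symm⟩
        · exact hyy' h5
      · rw [Sym2.eq_iff] at hmem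
        rcases hmem with ⟨h5, -⟩ | ⟨h5, -⟩
        · exact hyy' h5
        · exact hy ⟨j + 2, h5.symm⟩
      · exact hy (mem_range_of_mem_arcSupport (arc2.fst_mem_support_of_mem_edges hmem))
      · rw [Sym2.eq_iff] at hmem
        rcases hmem with ⟨h5, -⟩ | ⟨-, h6⟩
        · exact hy ⟨i, h5.symm⟩
        · exact hij (hu h6).symm
  · rw [Walk.length_cons, hp, Walk.length_append, Walk.length_reverse, Walk.length_cons,
      Walk.length_cons, Walk.length_concat, harc1, harc2, arcUp_length, arcUp_length,
      hval1, hval2]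
    omega

end EdgeCycleAux


/-- Suppose `G` contains a cycle `C` of length `n-1` (encoded by an injective map
`u : ZMod (n-1) → V` with consecutive vertices adjacent) but no cycle of length `n`,
the independence number of `G` equals `m-1` where `m ≤ (n+2)/2`, and
`Y = {y_1, …, y_{m-1}}` is an independent set of `m-1` vertices of `G` disjoint from
`V(C)`.  Then the number of edges of `G` with one endpoint in `Y` and the other in
`V(C)` is at most `(m-1)(m-3)`. -/
theorem edges_between_indepSet_and_cycle (n m : ℕ) (hn : 4 ≤ n) (hm : 2 * m ≤ n + 2)
    {V : Type*} (G : SimpleGraph V)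
    (u : ZMod (n - 1) → V) (hu : Function.Injective u)
    (hcyc : ∀ i : ZMod (n - 1), G.Adj (u i) (u (i + 1)))
    (hno : ¬ HasCycleOfLength G n)
    (hα_le : ∀ s : Finset V, (s : Set V).Pairwise (fun a b => ¬ G.Adj a b) → s.card ≤ m - 1)
    (hα_eq : ∃ s : Finset V, s.card = m - 1 ∧
      (s : Set V).Pairwise (fun a b => ¬ G.Adj a b))
    (y : Fin (m - 1) → V) (hyinj : Function.Injective y)
    (hyY : ∀ k, y k ∉ Set.range u)
    (hyind : ∀ k l, k ≠ l → ¬ G.Adj (y k) (y l)) :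
    ({p : V × V | p.1 ∈ Set.range y ∧ p.2 ∈ Set.range u ∧ G.Adj p.1 p.2}).ncard ≤
      (m - 1) * (m - 3) := by
  classical
  haveI : NeZero (n - 1) := ⟨by omega⟩
  have hL : 3 ≤ n - 1 := by omega
  have hno' : ¬ HasCycleOfLength G ((n - 1) + 1) := by
    rwa [show (n - 1) + 1 = n by omega]
  have hm2 : 2 ≤ m := by
    have h := hα_le {u 0} (by simp)
    rw [Finset.card_singleton] at h
    omega
  have factA : ∀ (k : Fin (m - 1)) (i : ZMod (n - 1)),
      G.Adj (y k) (u i) → G.Adj (y k) (u (i + 1)) → False := fun k i h1 h2 =>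
    hno' (EdgeCycleAux.cycleA hL hu hcyc (hyY k) h1 h2)
  have factB : ∀ (k : Fin (m - 1)) (i j : ZMod (n - 1)), i ≠ j →
      G.Adj (y k) (u i) → G.Adj (y k) (u j) → G.Adj (u (i + 1)) (u (j + 1)) → False := by
    intro k i j hij h1 h2 hch
    have hij1 : i ≠ j + 1 := by rintro rfl; exact factA k j h2 h1
    have hji1 : j ≠ i + 1 := by rintro rfl; exact factA k i h1 h2
    exact hno' (EdgeCycleAux.cycleB hL hu hcyc (hyY k) hij hij1 hji1 h1 h2 hch)
  set I : Fin (m - 1) → Finset (ZMod (n - 1)) :=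
    fun k => Finset.univ.filter (fun i => G.Adj (y k) (u i)) with hI
  have hmemI : ∀ k i, i ∈ I k ↔ G.Adj (y k) (u i) := by intro k i; simp [hI]
  have hsuccinj : ∀ k : Fin (m - 1), Set.InjOn (fun i => u (i + 1)) (I k) :=
    fun k a _ b _ h => add_right_cancel (hu h)
  have hIm2 : ∀ k, (I k).card ≤ m - 2 := by
    intro k
    set S : Finset V := (I k).image (fun i => u (i + 1)) ∪ {y k} with hS
    have hpair : (S : Set V).Pairwise (fun a b => ¬ G.Adj a b) := by
      intro a ha b hb hab
      simp only [hS, Finset.coe_union, Finset.coe_image, Finset.coe_singleton,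
        Set.mem_union, Set.mem_image, Set.mem_singleton_iff, Finset.mem_coe] at ha hb
      rcases ha with ⟨i, hi, rfl⟩ | rfl <;> rcases hb with ⟨j, hj, rfl⟩ | rfl
      · intro hadj
        have hij : i ≠ j := fun h => hab (by rw [h])
        exact factB k i j hij ((hmemI k i).1 hi) ((hmemI k j).1 hj) hadj
      · exact fun hadj => factA k i ((hmemI k i).1 hi) hadj.symm
      · exact fun hadj => factA k j ((hmemI k j).1 hj) hadj
      · exact absurd rfl hab
    have hynot : y k ∉ (I k).image (fun i => u (i + 1)) := by
      intro hmem
      obtain ⟨i, -, hi⟩ := Finset.mem_image.1 hmem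
      exact hyY k ⟨i + 1, hi⟩
    have hcard := hα_le S hpair
    rw [hS, Finset.card_union_of_disjoint (Finset.disjoint_singleton_right.2 hynot),
      Finset.card_image_of_injOn (hsuccinj k), Finset.card_singleton] at hcard
    omega
  have factE : ∀ i0 : ZMod (n - 1), ∃ k, G.Adj (y k) (u i0) := by
    intro i0
    by_contra hcon
    push_neg at hcon
    set S : Finset V := Finset.univ.image y ∪ {u i0} with hS
    have hpair : (S : Set V).Pairwise (fun a b => ¬ G.Adj a b) := by
      intro a ha b hb hab
      simp only [hS, Finset.coe_union, Finset.coe_image, Finset.coe_singleton,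
        Set.mem_union, Set.mem_image, Set.mem_singleton_iff, Finset.coe_univ,
        Set.mem_univ, true_and, Set.image_univ, Set.mem_range] at ha hb
      rcases ha with ⟨k, rfl⟩ | rfl <;> rcases hb with ⟨l, rfl⟩ | rfl
      · exact hyind k l (fun h => hab (by rw [h]))
      · exact hcon k
      · exact fun hadj => hcon l hadj.symm
      · exact absurd rfl hab
    have hunot : u i0 ∉ Finset.univ.image y := by
      intro hmem
      obtain ⟨k, -, hk⟩ := Finset.mem_image.1 hmem
      exact hyY k ⟨i0, hk.symm⟩
    have hcard := hα_le S hpair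
    rw [hS, Finset.card_union_of_disjoint (Finset.disjoint_singleton_right.2 hunot),
      Finset.card_image_of_injective _ hyinj, Finset.card_univ, Fintype.card_fin,
      Finset.card_singleton] at hcard
    omega
  have hIle3 : ∀ k, (I k).card ≤ m - 3 := by
    intro k
    by_contra hbig
    push_neg at hbig
    have hcard : (I k).card = m - 2 := by have := hIm2 k; omega
    have hm3 : 3 ≤ m := by have := hIm2 k; omega
    have hgap : ∃ j0 ∈ I k, j0 + 2 ∉ I k := by
      by_contra hcon
      push_neg at hcon
      obtain ⟨j0, hj0⟩ := Finset.card_pos.1 (show 0 < (I k).card by omega)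
      have hf : ∀ t : ℕ, j0 + ((2 * t : ℕ) : ZMod (n - 1)) ∈ I k := by
        intro t
        induction t with
        | zero => simpa using hj0
        | succ t ih =>
            have h2 := hcon _ ih
            have he : j0 + ((2 * (t + 1) : ℕ) : ZMod (n - 1))
                = (j0 + ((2 * t : ℕ) : ZMod (n - 1))) + 2 := by push_cast; ring
            rwa [he]
      have hinj : Set.InjOn (fun t : ℕ => j0 + ((2 * t : ℕ) : ZMod (n - 1)))
          (Finset.range (m - 1)) := by
        intro s hs t ht h
        rw [Finset.coe_range, Set.mem_Iio] at hs ht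
        have he : ((2 * s : ℕ) : ZMod (n - 1)) = ((2 * t : ℕ) : ZMod (n - 1)) := by
          have := add_left_cancel h
          exact this
        have := EdgeCycleAux.natCast_inj_lt (by omega) (by omega) he
        omega
      have hsub : (Finset.range (m - 1)).image (fun t : ℕ => j0 + ((2 * t : ℕ) : ZMod (n - 1)))
          ⊆ I k := by
        intro x hx
        obtain ⟨t, -, rfl⟩ := Finset.mem_image.1 hx
        exact hf t
      have hle := Finset.card_le_card hsub
      rw [Finset.card_image_of_injOn hinj, Finset.card_range] at hle
      omega
    obtain ⟨j0, hj0I, hj02⟩ := hgap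
    have hj0adj : G.Adj (y k) (u j0) := (hmemI k j0).1 hj0I
    obtain ⟨k', hk'adj⟩ := factE (j0 + 2)
    have hkk' : k' ≠ k := by rintro rfl; exact hj02 ((hmemI _ _).2 hk'adj)
    have hsucc : ∃ φ ∈ I k, G.Adj (y k') (u (φ + 1)) := by
      by_contra hcon
      push_neg at hcon
      set S : Finset V := (I k).image (fun i => u (i + 1)) ∪ {y k, y k'} with hS
      have hyy' : y k ≠ y k' := fun h => hkk' (hyinj h.symm)
      have hpair : (S : Set V).Pairwise (fun a b => ¬ G.Adj a b) := by
        intro a ha b hb hab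
        simp only [hS, Finset.coe_union, Finset.coe_image, Finset.coe_insert,
          Finset.coe_singleton, Set.mem_union, Set.mem_image, Set.mem_insert_iff,
          Set.mem_singleton_iff, Finset.mem_coe] at ha hb
        rcases ha with ⟨i, hi, rfl⟩ | rfl | rfl <;> rcases hb with ⟨j, hj, rfl⟩ | rfl | rfl
        · intro hadj
          have hij : i ≠ j := fun h => hab (by rw [h])
          exact factB k i j hij ((hmemI k i).1 hi) ((hmemI k j).1 hj) hadj
        · exact fun hadj => factA k i ((hmemI k i).1 hi) hadj.symm
        · exact fun hadj => hcon i hi hadj.symm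
        · exact fun hadj => factA k j ((hmemI k j).1 hj) hadj
        · exact absurd rfl hab
        · exact hyind k k' (Ne.symm hkk')
        · exact fun hadj => hcon j hj hadj
        · exact hyind k' k hkk'
        · exact absurd rfl hab
      have hynot : ∀ l : Fin (m - 1), y l ∉ (I k).image (fun i => u (i + 1)) := by
        intro l hmem
        obtain ⟨i, -, hi⟩ := Finset.mem_image.1 hmem
        exact hyY l ⟨i + 1, hi⟩
      have hcard2 := hα_le S hpair
      rw [hS, Finset.card_union_of_disjoint, Finset.card_image_of_injOn (hsuccinj k),
        Finset.card_insert_of_notMem (Finset.notMem_singleton.2 hyy'),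
        Finset.card_singleton] at hcard2
      · omega
      · rw [Finset.disjoint_insert_right, Finset.disjoint_singleton_right]
        exact ⟨hynot k, hynot k'⟩
    obtain ⟨φ, hφI, hφadj⟩ := hsucc
    have hφadj0 : G.Adj (y k) (u φ) := (hmemI k φ).1 hφI
    by_cases hφj : φ = j0
    · subst hφj
      exact factA k' (φ + 1) hφadj (by rwa [show φ + 1 + 1 = φ + 2 by ring])
    · have hij1 : φ ≠ j0 + 1 := by
        intro h
        exact factA k j0 hj0adj ((hmemI k (j0 + 1)).1 (h ▸ hφI))
      have hji1 : j0 ≠ φ + 1 := by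
        intro h
        exact factA k φ hφadj0 ((hmemI k (φ + 1)).1 (h ▸ hj0I))
      have hyy' : y k ≠ y k' := fun h => hkk' (hyinj h.symm)
      exact hno' (EdgeCycleAux.cycleC hL hu hcyc hyy' (hyY k) (hyY k') hφj hij1 hji1
        hφadj0 hj0adj hφadj hk'adj)
  have hfin : {p : V × V | p.1 ∈ Set.range y ∧ p.2 ∈ Set.range u ∧ G.Adj p.1 p.2}
      = (fun q : Fin (m - 1) × ZMod (n - 1) => (y q.1, u q.2)) ''
        {q : Fin (m - 1) × ZMod (n - 1) | G.Adj (y q.1) (u q.2)} := by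
    ext p
    constructor
    · rintro ⟨⟨k, hk⟩, ⟨i, hi⟩, hadj⟩
      refine ⟨(k, i), ?_, ?_⟩
      · simp only [Set.mem_setOf_eq]
        rwa [hk, hi]
      · rw [Prod.ext_iff]
        exact ⟨hk, hi⟩
    · rintro ⟨⟨k, i⟩, hq, rfl⟩
      exact ⟨⟨k, rfl⟩, ⟨i, rfl⟩, hq⟩
  rw [hfin]
  refine le_trans (Set.ncard_image_le (Set.toFinite _)) ?_
  have hset : {q : Fin (m - 1) × ZMod (n - 1) | G.Adj (y q.1) (u q.2)}
      = ↑(Finset.univ.filter fun q : Fin (m - 1) × ZMod (n - 1) => G.Adj (y q.1) (u q.2)) := by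
    ext q; simp
  rw [hset, Set.ncard_coe_finset]
  have hsum : (Finset.univ.filter
        fun q : Fin (m - 1) × ZMod (n - 1) => G.Adj (y q.1) (u q.2)).card
      = ∑ k : Fin (m - 1), (I k).card := by
    rw [Finset.card_eq_sum_card_fiberwise
      (f := Prod.fst) (t := Finset.univ) (fun q _ => Finset.mem_univ q.1)]
    refine Finset.sum_congr rfl ?_
    intro k _
    have hfib : (Finset.univ.filter
          fun q : Fin (m - 1) × ZMod (n - 1) => G.Adj (y q.1) (u q.2)).filter
          (fun q => q.1 = k) = (I k).image (fun i => (k, i)) := by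
      ext q
      simp only [Finset.mem_filter, Finset.mem_univ, true_and, Finset.mem_image]
      constructor
      · rintro ⟨hadj, rfl⟩
        exact ⟨q.2, (hmemI _ _).2 hadj, rfl⟩
      · rintro ⟨i, hi, rfl⟩
        exact ⟨(hmemI _ _).1 hi, rfl⟩
    rw [hfib, Finset.card_image_of_injective _ (fun a b h => (Prod.ext_iff.1 h).2)]
  rw [hsum]
  calc ∑ k : Fin (m - 1), (I k).card ≤ ∑ _k : Fin (m - 1), (m - 3) :=
        Finset.sum_le_sum (fun k _ => hIle3 k)
    _ = (m - 1) * (m - 3) := by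
        rw [Finset.sum_const, Finset.card_univ, Fintype.card_fin, smul_eq_mul]
end

section
/- Let m ≥ 7 and n ≥ (m-3)(m-1)+2. Let G be a C_n-free graph with independence number at most m-1 that contains a cycle C of length n-1. Then the set of vertices of G outside V(C) contains no independent set of m-1 vertices. -/
open SimpleGraph

private lemma exists_arc {V : Type*} (G : SimpleGraph V) (v : ℕ → V) :
    ∀ (d a : ℕ), (∀ t, a ≤ t → t < a + d → G.Adj (v t) (v (t + 1))) →
    ∃ w : G.Walk (v a) (v (a + d)), w.length = d ∧
      w.support = (List.range' a (d + 1)).map v ∧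
      w.edges = (List.range' a d).map (fun i => s(v i, v (i + 1))) := by
  intro d
  induction d with
  | zero =>
    intro a _
    exact ⟨SimpleGraph.Walk.nil, by simp, by simp, by simp⟩
  | succ d ih =>
    intro a h
    obtain ⟨w, hl, hs, he⟩ := ih (a + 1) (fun t ht ht' => h t (by omega) (by omega))
    have key : (a + 1) + d = a + (d + 1) := by omega
    refine ⟨(SimpleGraph.Walk.cons (h a le_rfl (by omega)) w).copy rfl (by rw [key]), ?_, ?_, ?_⟩
    · rw [SimpleGraph.Walk.length_copy, SimpleGraph.Walk.length_cons, hl]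
    · rw [SimpleGraph.Walk.support_copy, SimpleGraph.Walk.support_cons, hs]
      simp [List.range'_succ]
    · rw [SimpleGraph.Walk.edges_copy, SimpleGraph.Walk.edges_cons, he]
      simp [List.range'_succ]

private lemma hasCycle_of_fn {V : Type*} (G : SimpleGraph V) (k : ℕ) (hk : 3 ≤ k) (v : ℕ → V)
    (hinj : ∀ x, x < k → ∀ y, y < k → v x = v y → x = y)
    (hadj : ∀ t, t + 1 < k → G.Adj (v t) (v (t + 1)))
    (hlast : G.Adj (v (k - 1)) (v 0)) : HasCycleOfLength G k := by
  obtain ⟨w, hl, hs, he⟩ := exists_arc G v (k - 1) 0 (fun t ht ht' => hadj t (by omega))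
  have e0 : 0 + (k - 1) = k - 1 := by omega
  let w' : G.Walk (v 0) (v (k - 1)) := w.copy rfl (by rw [e0])
  have hl' : w'.length = k - 1 := by rw [SimpleGraph.Walk.length_copy, hl]
  have hs' : w'.support = (List.range' 0 k).map v := by
    rw [SimpleGraph.Walk.support_copy, hs]
    congr 2
    omega
  have he' : w'.edges = (List.range' 0 (k - 1)).map (fun i => s(v i, v (i + 1))) := by
    rw [SimpleGraph.Walk.edges_copy, he]
  have hpath : w'.IsPath := by
    apply SimpleGraph.Walk.IsPath.mk'
    rw [hs']
    apply List.Nodup.map_on _ (List.nodup_range' 1 (by omega))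
    intro x hx y hy hxy
    rw [List.mem_range'_1] at hx hy
    exact hinj x (by omega) y (by omega) hxy
  have hedge : s(v 0, v (k - 1)) ∉ w'.reverse.edges := by
    rw [SimpleGraph.Walk.edges_reverse, List.mem_reverse, he']
    intro hmem
    obtain ⟨i, hi, hie⟩ := List.mem_map.mp hmem
    rw [List.mem_range'_1] at hi
    rw [Sym2.eq_iff] at hie
    rcases hie with ⟨h1, h2⟩ | ⟨h1, h2⟩
    · have e1 : i = 0 := hinj i (by omega) 0 (by omega) h1
      have e2 : i + 1 = k - 1 := hinj (i + 1) (by omega) (k - 1) (by omega) h2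
      omega
    · have e1 : i = k - 1 := hinj i (by omega) (k - 1) (by omega) h1
      omega
  refine ⟨v 0, SimpleGraph.Walk.cons hlast.symm w'.reverse, ?_, ?_⟩
  · rw [SimpleGraph.Walk.cons_isCycle_iff]
    exact ⟨(SimpleGraph.Walk.isPath_reverse_iff w').mpr hpath, hedge⟩
  · rw [SimpleGraph.Walk.length_cons, SimpleGraph.Walk.length_reverse, hl']
    omega

private lemma key_inj {V : Type*} {L : ℕ} [NeZero L] {u : ZMod L → V}
    (hu : Function.Injective u) (P : ZMod L) (c d : ℕ)
    (hc1 : 1 ≤ c) (hcL : c ≤ L) (hd1 : 1 ≤ d) (hdL : d ≤ L)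
    (h : u (P + (c : ZMod L)) = u (P + (d : ZMod L))) : c = d := by
  have h' : ((c : ZMod L)) = (d : ZMod L) := add_left_cancel (hu h)
  have hmod : c % L = d % L := (ZMod.natCast_eq_natCast_iff _ _ _).mp h'
  rcases Nat.lt_or_ge c L with hc | hc
  · rcases Nat.lt_or_ge d L with hd | hd
    · rw [Nat.mod_eq_of_lt hc, Nat.mod_eq_of_lt hd] at hmod; exact hmod
    · have hd' : d = L := by omega
      rw [hd', Nat.mod_eq_of_lt hc, Nat.mod_self] at hmod; omega
  · have hc' : c = L := by omega
    rcases Nat.lt_or_ge d L with hd | hd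
    · rw [hc', Nat.mod_self, Nat.mod_eq_of_lt hd] at hmod; omega
    · omega

/-- Construction A : a vertex off the cycle adjacent to two consecutive
cycle vertices yields a cycle one longer. -/
private lemma consA {V : Type*} (G : SimpleGraph V) (L : ℕ) (hL : 3 ≤ L)
    (u : ZMod L → V) (hu : Function.Injective u)
    (hcyc : ∀ i : ZMod L, G.Adj (u i) (u (i + 1)))
    (x : V) (hx : x ∉ Set.range u) (i : ZMod L)
    (h0 : G.Adj x (u i)) (h1 : G.Adj x (u (i + 1))) :
    HasCycleOfLength G (L + 1) := by
  haveI : NeZero L := ⟨by omega⟩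
  set v : ℕ → V := fun t => if t = 0 then x else u (i + (t : ZMod L)) with hv
  have hv0 : v 0 = x := by simp [hv]
  have hv1 : ∀ t : ℕ, 1 ≤ t → v t = u (i + (t : ZMod L)) := by
    intro t ht; simp only [hv]; rw [if_neg (by omega)]
  apply hasCycle_of_fn G (L + 1) (by omega) v
  · intro t₁ ht₁ t₂ ht₂ heq
    by_cases e₁ : t₁ = 0
    · by_cases e₂ : t₂ = 0
      · omega
      · rw [e₁, hv0, hv1 t₂ (by omega)] at heq
        exact absurd ⟨_, heq.symm⟩ hx
    · by_cases e₂ : t₂ = 0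
      · rw [e₂, hv0, hv1 t₁ (by omega)] at heq
        exact absurd ⟨_, heq⟩ hx
      · rw [hv1 t₁ (by omega), hv1 t₂ (by omega)] at heq
        exact key_inj hu i t₁ t₂ (by omega) (by omega) (by omega) (by omega) heq
  · intro t ht
    by_cases e0 : t = 0
    · subst e0
      rw [hv0, hv1 1 le_rfl]
      rw [Nat.cast_one]
      exact h1
    · rw [hv1 t (by omega), hv1 (t + 1) (by omega)]
      rw [Nat.cast_add, Nat.cast_one, ← add_assoc]
      exact hcyc _
  · have : L + 1 - 1 = L := by omega
    rw [this, hv0, hv1 L (by omega), ZMod.natCast_self, add_zero]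
    exact h0.symm

/-- Construction B : vertex `x` off the cycle adjacent to `u P` and `u Q`,
plus a chord between the successors. -/
private lemma consB {V : Type*} (G : SimpleGraph V) (L : ℕ) (hL : 3 ≤ L)
    (u : ZMod L → V) (hu : Function.Injective u)
    (hcyc : ∀ i : ZMod L, G.Adj (u i) (u (i + 1)))
    (x : V) (hx : x ∉ Set.range u) (P Q : ZMod L)
    (hPQ : P ≠ Q) (hQP1 : Q ≠ P + 1) (hPQ1 : P ≠ Q + 1)
    (h1 : G.Adj x (u P)) (h2 : G.Adj x (u Q))
    (hchord : G.Adj (u (P + 1)) (u (Q + 1))) :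
    HasCycleOfLength G (L + 1) := by
  haveI : NeZero L := ⟨by omega⟩
  have hacast : (((Q - P).val : ℕ) : ZMod L) = Q - P := ZMod.natCast_rightInverse _
  set a := (Q - P).val with hadef
  have haL : a < L := ZMod.val_lt _
  have ha0 : a ≠ 0 := by
    intro h
    apply hPQ
    have h' : Q - P = 0 := by rw [← hacast, h, Nat.cast_zero]
    have := sub_eq_zero.mp h'
    exact this.symm
  have ha1 : a ≠ 1 := by
    intro h
    apply hQP1
    have h' : Q - P = 1 := by rw [← hacast, h, Nat.cast_one]
    linear_combination h'
  have haL1 : a ≠ L - 1 := by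
    intro h
    apply hPQ1
    have hc1 : ((L - 1 : ℕ) : ZMod L) = -1 := by
      have e : L - 1 + 1 = L := by omega
      have h2' : ((L - 1 + 1 : ℕ) : ZMod L) = ((L - 1 : ℕ) : ZMod L) + 1 := by
        rw [Nat.cast_add, Nat.cast_one]
      rw [e, ZMod.natCast_self] at h2'
      linear_combination -h2'
    have h' : Q - P = -1 := by rw [← hacast, h, hc1]
    linear_combination -h'
  set b := L - a with hbdef
  set v : ℕ → V := fun t => if t = 0 then x
    else if t ≤ b then u (P + ((L + 1 - t : ℕ) : ZMod L))
    else u (P + ((t - b : ℕ) : ZMod L)) with hv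
  have hv0 : v 0 = x := by simp [hv]
  have hv1 : ∀ t : ℕ, 1 ≤ t → t ≤ b → v t = u (P + ((L + 1 - t : ℕ) : ZMod L)) := by
    intro t h1' h2'; simp only [hv]; rw [if_neg (by omega), if_pos h2']
  have hv2 : ∀ t : ℕ, b < t → v t = u (P + ((t - b : ℕ) : ZMod L)) := by
    intro t h1'; simp only [hv]; rw [if_neg (by omega), if_neg (by omega)]
  apply hasCycle_of_fn G (L + 1) (by omega) v
  · intro t₁ ht₁ t₂ ht₂ heq
    by_cases e₁ : t₁ = 0
    · by_cases e₂ : t₂ = 0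
      · omega
      · exfalso
        rw [e₁, hv0] at heq
        by_cases c₂ : t₂ ≤ b
        · rw [hv1 t₂ (by omega) c₂] at heq; exact hx ⟨_, heq.symm⟩
        · rw [hv2 t₂ (by omega)] at heq; exact hx ⟨_, heq.symm⟩
    · by_cases e₂ : t₂ = 0
      · exfalso
        rw [e₂, hv0] at heq
        by_cases c₁ : t₁ ≤ b
        · rw [hv1 t₁ (by omega) c₁] at heq; exact hx ⟨_, heq⟩
        · rw [hv2 t₁ (by omega)] at heq; exact hx ⟨_, heq⟩
      · by_cases c₁ : t₁ ≤ b <;> by_cases c₂ : t₂ ≤ b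
        · rw [hv1 t₁ (by omega) c₁, hv1 t₂ (by omega) c₂] at heq
          have := key_inj hu P _ _ (by omega) (by omega) (by omega) (by omega) heq
          omega
        · rw [hv1 t₁ (by omega) c₁, hv2 t₂ (by omega)] at heq
          have := key_inj hu P _ _ (by omega) (by omega) (by omega) (by omega) heq
          omega
        · rw [hv2 t₁ (by omega), hv1 t₂ (by omega) c₂] at heq
          have := key_inj hu P _ _ (by omega) (by omega) (by omega) (by omega) heq
          omega
        · rw [hv2 t₁ (by omega), hv2 t₂ (by omega)] at heq
          have := key_inj hu P _ _ (by omega) (by omega) (by omega) (by omega) heq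
          omega
  · intro t ht
    by_cases e0 : t = 0
    · subst e0
      rw [hv0, hv1 1 le_rfl (by omega)]
      have e : L + 1 - 1 = L := by omega
      rw [e, ZMod.natCast_self, add_zero]
      exact h1
    · by_cases eb : t + 1 ≤ b
      · rw [hv1 t (by omega) (by omega), hv1 (t + 1) (by omega) eb]
        have e : L + 1 - t = (L + 1 - (t + 1)) + 1 := by omega
        rw [e, Nat.cast_add, Nat.cast_one, ← add_assoc]
        exact (hcyc _).symm
      · by_cases et : t = b
        · subst et
          rw [hv1 b (by omega) le_rfl, hv2 (b + 1) (by omega)]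
          have e2 : L + 1 - b = a + 1 := by omega
          have e3 : b + 1 - b = 1 := by omega
          rw [e2, e3]
          have e4 : P + ((a + 1 : ℕ) : ZMod L) = Q + 1 := by
            rw [Nat.cast_add, Nat.cast_one, hacast]; ring
          rw [e4, Nat.cast_one]
          exact hchord.symm
        · rw [hv2 t (by omega), hv2 (t + 1) (by omega)]
          have e : t + 1 - b = (t - b) + 1 := by omega
          rw [e, Nat.cast_add, Nat.cast_one, ← add_assoc]
          exact hcyc _
  · have e : L + 1 - 1 = L := by omega
    rw [e, hv0, hv2 L (by omega)]
    have e2 : L - b = a := by omega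
    rw [e2, hacast]
    have e3 : P + (Q - P) = Q := by ring
    rw [e3]
    exact h2.symm

/-- Construction C : `x ~ u P, u Q` and `y ~ u (P+1), u (Q+2)` with `x ≠ y`
off the cycle, omitting `u (Q+1)`, yields a cycle one longer. -/
private lemma consC {V : Type*} (G : SimpleGraph V) (L : ℕ) (hL : 4 ≤ L)
    (u : ZMod L → V) (hu : Function.Injective u)
    (hcyc : ∀ i : ZMod L, G.Adj (u i) (u (i + 1)))
    (x y : V) (hx : x ∉ Set.range u) (hy : y ∉ Set.range u) (hxy : x ≠ y)
    (P Q : ZMod L) (hPQ : P ≠ Q) (hPQ1 : P ≠ Q + 1)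
    (h1 : G.Adj x (u P)) (h2 : G.Adj x (u Q))
    (h3 : G.Adj y (u (P + 1))) (h4 : G.Adj y (u (Q + 2))) :
    HasCycleOfLength G (L + 1) := by
  haveI : NeZero L := ⟨by omega⟩
  have hacast : (((Q - P).val : ℕ) : ZMod L) = Q - P := ZMod.natCast_rightInverse _
  set a := (Q - P).val with hadef
  have haL : a < L := ZMod.val_lt _
  have ha0 : a ≠ 0 := by
    intro h
    apply hPQ
    have h' : Q - P = 0 := by rw [← hacast, h, Nat.cast_zero]
    exact (sub_eq_zero.mp h').symm
  have haL1 : a ≠ L - 1 := by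
    intro h
    apply hPQ1
    have hc1 : ((L - 1 : ℕ) : ZMod L) = -1 := by
      have e : L - 1 + 1 = L := by omega
      have h2' : ((L - 1 + 1 : ℕ) : ZMod L) = ((L - 1 : ℕ) : ZMod L) + 1 := by
        rw [Nat.cast_add, Nat.cast_one]
      rw [e, ZMod.natCast_self] at h2'
      linear_combination -h2'
    have h' : Q - P = -1 := by rw [← hacast, h, hc1]
    linear_combination -h'
  set b := L - 1 - a with hbdef
  set v : ℕ → V := fun t => if t = 0 then x
    else if t ≤ b then u (P + ((L + 1 - t : ℕ) : ZMod L))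
    else if t = b + 1 then y
    else u (P + ((t - b - 1 : ℕ) : ZMod L)) with hv
  have hv0 : v 0 = x := by simp [hv]
  have hv1 : ∀ t : ℕ, 1 ≤ t → t ≤ b → v t = u (P + ((L + 1 - t : ℕ) : ZMod L)) := by
    intro t ha' hb'; simp only [hv]; rw [if_neg (by omega), if_pos hb']
  have hvy : v (b + 1) = y := by
    have e1 : ¬(b + 1 = 0) := by omega
    have e2 : ¬(b + 1 ≤ b) := by omega
    simp [hv, e1, e2]
  have hv2 : ∀ t : ℕ, b + 1 < t → v t = u (P + ((t - b - 1 : ℕ) : ZMod L)) := by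
    intro t ha'; simp only [hv]
    rw [if_neg (by omega), if_neg (by omega), if_neg (by omega)]
  apply hasCycle_of_fn G (L + 1) (by omega) v
  · intro t₁ ht₁ t₂ ht₂ heq
    have hcases : ∀ t : ℕ, t < L + 1 → t = 0 ∨ (1 ≤ t ∧ t ≤ b) ∨ t = b + 1 ∨ b + 1 < t := by
      intro t _; omega
    rcases hcases t₁ ht₁ with e₁ | ⟨e₁, e₁'⟩ | e₁ | e₁ <;>
      rcases hcases t₂ ht₂ with e₂ | ⟨e₂, e₂'⟩ | e₂ | e₂
    · omega
    · exfalso; rw [e₁, hv0, hv1 t₂ e₂ e₂'] at heq; exact hx ⟨_, heq.symm⟩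
    · exfalso; rw [e₁, e₂, hv0, hvy] at heq; exact hxy heq
    · exfalso; rw [e₁, hv0, hv2 t₂ e₂] at heq; exact hx ⟨_, heq.symm⟩
    · exfalso; rw [e₂, hv0, hv1 t₁ e₁ e₁'] at heq; exact hx ⟨_, heq⟩
    · rw [hv1 t₁ e₁ e₁', hv1 t₂ e₂ e₂'] at heq
      have := key_inj hu P _ _ (by omega) (by omega) (by omega) (by omega) heq
      omega
    · exfalso; rw [e₂, hvy, hv1 t₁ e₁ e₁'] at heq; exact hy ⟨_, heq⟩
    · rw [hv1 t₁ e₁ e₁', hv2 t₂ e₂] at heq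
      have := key_inj hu P _ _ (by omega) (by omega) (by omega) (by omega) heq
      omega
    · exfalso; rw [e₁, e₂, hvy, hv0] at heq; exact hxy heq.symm
    · exfalso; rw [e₁, hvy, hv1 t₂ e₂ e₂'] at heq; exact hy ⟨_, heq.symm⟩
    · omega
    · exfalso; rw [e₁, hvy, hv2 t₂ e₂] at heq; exact hy ⟨_, heq.symm⟩
    · exfalso; rw [e₂, hv0, hv2 t₁ e₁] at heq; exact hx ⟨_, heq⟩
    · rw [hv2 t₁ e₁, hv1 t₂ e₂ e₂'] at heq
      have := key_inj hu P _ _ (by omega) (by omega) (by omega) (by omega) heq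
      omega
    · exfalso; rw [e₂, hvy, hv2 t₁ e₁] at heq; exact hy ⟨_, heq⟩
    · rw [hv2 t₁ e₁, hv2 t₂ e₂] at heq
      have := key_inj hu P _ _ (by omega) (by omega) (by omega) (by omega) heq
      omega
  · intro t ht
    by_cases e0 : t = 0
    · subst e0
      rw [hv0, hv1 1 le_rfl (by omega)]
      have e : L + 1 - 1 = L := by omega
      rw [e, ZMod.natCast_self, add_zero]
      exact h1
    · by_cases eb : t + 1 ≤ b
      · rw [hv1 t (by omega) (by omega), hv1 (t + 1) (by omega) eb]
        have e : L + 1 - t = (L + 1 - (t + 1)) + 1 := by omega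
        rw [e, Nat.cast_add, Nat.cast_one, ← add_assoc]
        exact (hcyc _).symm
      · by_cases et : t = b
        · subst et
          rw [hv1 b (by omega) le_rfl, hvy]
          have e2 : L + 1 - b = a + 2 := by omega
          rw [e2]
          have e4 : P + ((a + 2 : ℕ) : ZMod L) = Q + 2 := by
            push_cast [hacast]; ring
          rw [e4]
          exact h4.symm
        · by_cases et1 : t = b + 1
          · subst et1
            rw [hvy, hv2 (b + 1 + 1) (by omega)]
            have e : b + 1 + 1 - b - 1 = 1 := by omega
            rw [e, Nat.cast_one]
            exact h3
          · rw [hv2 t (by omega), hv2 (t + 1) (by omega)]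
            have e : t + 1 - b - 1 = (t - b - 1) + 1 := by omega
            rw [e, Nat.cast_add, Nat.cast_one, ← add_assoc]
            exact hcyc _
  · have e : L + 1 - 1 = L := by omega
    rw [e, hv0, hv2 L (by omega)]
    have e2 : L - b - 1 = a := by omega
    rw [e2, hacast]
    have e3 : P + (Q - P) = Q := by ring
    rw [e3]
    exact h2.symm

/-- Let `m ≥ 7` and `n ≥ (m-3)(m-1)+2`.  Let `G` be a `C_n`-free graph with
independence number at most `m-1` that contains a cycle `C` of length `n-1`
(encoded by an injective map `u : ZMod (n-1) → V` with consecutive vertices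
adjacent).  Then the set of vertices of `G` outside `V(C)` contains no independent
set of `m-1` vertices. -/
theorem no_large_indepSet_outside_cycle (m n : ℕ) (hm : 7 ≤ m)
    (hn : (m - 3) * (m - 1) + 2 ≤ n)
    {V : Type*} (G : SimpleGraph V)
    (hno : ¬ HasCycleOfLength G n)
    (hα : ∀ s : Finset V, (s : Set V).Pairwise (fun a b => ¬ G.Adj a b) → s.card ≤ m - 1)
    (u : ZMod (n - 1) → V) (hu : Function.Injective u)
    (hcyc : ∀ i : ZMod (n - 1), G.Adj (u i) (u (i + 1))) :
    ¬ ∃ s : Finset V, s.card = m - 1 ∧ (∀ v ∈ s, v ∉ Set.range u) ∧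
      (s : Set V).Pairwise (fun a b => ¬ G.Adj a b) := by
  classical
  rintro ⟨S, hScard, hSout, hSind⟩
  obtain ⟨m', rfl⟩ : ∃ m', m = m' + 7 := ⟨m - 7, by omega⟩
  have hm1 : m' + 7 - 1 = m' + 6 := by omega
  have hm3 : m' + 7 - 3 = m' + 4 := by omega
  rw [hm3, hm1] at hn
  rw [hm1] at hScard
  have hα' : ∀ s : Finset V, (s : Set V).Pairwise (fun a b => ¬ G.Adj a b) →
      s.card ≤ m' + 6 := fun s h => hm1 ▸ hα s h
  have hprod : 24 ≤ (m' + 4) * (m' + 6) := by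
    have := Nat.mul_le_mul (show 4 ≤ m' + 4 by omega) (show 6 ≤ m' + 6 by omega)
    omega
  have hL : (m' + 4) * (m' + 6) + 1 ≤ n - 1 := by omega
  have hprod2 : 2 * (m' + 6) ≤ (m' + 4) * (m' + 6) := by
    have := Nat.mul_le_mul (show 2 ≤ m' + 4 by omega) (le_refl (m' + 6))
    omega
  have hL3 : 25 ≤ n - 1 := by omega
  have hn' : n - 1 + 1 = n := by omega
  haveI : NeZero (n - 1) := ⟨by omega⟩
  rw [← hn'] at hno
  -- every cycle vertex has a neighbour in S
  have F1 : ∀ i : ZMod (n - 1), ∃ a, a ∈ S ∧ G.Adj (u i) a := by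
    intro i
    by_contra h
    push_neg at h
    have hui : u i ∉ S := fun hmem => hSout _ hmem ⟨i, rfl⟩
    have hpair : ((insert (u i) S : Finset V) : Set V).Pairwise (fun a b => ¬ G.Adj a b) := by
      intro a ha b hb hab
      simp only [Finset.coe_insert, Set.mem_insert_iff, Finset.mem_coe] at ha hb
      rcases ha with rfl | ha
      · rcases hb with rfl | hb
        · exact absurd rfl hab
        · exact h b hb
      · rcases hb with rfl | hb
        · exact fun hadj => h a ha hadj.symm
        · exact hSind ha hb hab
    have := hα' _ hpair
    rw [Finset.card_insert_of_notMem hui, hScard] at this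
    omega
  choose f hfS hfadj using F1
  have hcard_univ : (Finset.univ : Finset (ZMod (n - 1))).card = n - 1 := by
    rw [Finset.card_univ, ZMod.card]
  obtain ⟨s₀, hs₀S, hs₀⟩ := Finset.exists_lt_card_fiber_of_mul_lt_card_of_maps_to
    (s := (Finset.univ : Finset (ZMod (n - 1)))) (t := S) (f := f) (n := m' + 4)
    (fun i _ => hfS i) (by rw [hScard, hcard_univ, Nat.mul_comm]; omega)
  set N := Finset.filter (fun i : ZMod (n - 1) => f i = s₀) Finset.univ with hNdef
  have hNadj : ∀ p ∈ N, G.Adj (u p) s₀ := by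
    intro p hp
    have := (Finset.mem_filter.mp hp).2
    rw [← this]
    exact hfadj p
  have hs₀out : s₀ ∉ Set.range u := hSout _ hs₀S
  have noTwoCons : ∀ (x : V), x ∉ Set.range u →
      ∀ i : ZMod (n - 1), G.Adj x (u i) → G.Adj x (u (i + 1)) → False := by
    intro x hx i hx0 hx1
    exact hno (consA G (n - 1) (by omega) u hu hcyc x hx i hx0 hx1)
  -- the successors of N together with s₀ form an independent set
  set W : Finset V := insert s₀ (N.image (fun p => u (p + 1))) with hWdef
  have hWpair : (W : Set V).Pairwise (fun a b => ¬ G.Adj a b) := by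
    have hside : ∀ p ∈ N, ∀ q ∈ N, p ≠ q → ¬ G.Adj (u (p + 1)) (u (q + 1)) := by
      intro p hp q hq hpq hadj
      by_cases hq1 : q = p + 1
      · exact noTwoCons s₀ hs₀out p ((hNadj p hp).symm) (hq1 ▸ (hNadj q hq).symm)
      by_cases hp1 : p = q + 1
      · exact noTwoCons s₀ hs₀out q ((hNadj q hq).symm) (hp1 ▸ (hNadj p hp).symm)
      · exact hno (consB G (n - 1) (by omega) u hu hcyc s₀ hs₀out p q hpq hq1 hp1
          ((hNadj p hp).symm) ((hNadj q hq).symm) hadj)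
    intro a ha b hb hab
    simp only [hWdef, Finset.coe_insert, Set.mem_insert_iff, Finset.mem_coe,
      Finset.mem_image] at ha hb
    rcases ha with rfl | ⟨p, hp, rfl⟩
    · rcases hb with rfl | ⟨q, hq, rfl⟩
      · exact absurd rfl hab
      · exact fun hadj => noTwoCons a hs₀out q ((hNadj q hq).symm) hadj
    · rcases hb with rfl | ⟨q, hq, rfl⟩
      · exact fun hadj => noTwoCons b hs₀out p ((hNadj p hp).symm) hadj.symm
      · refine hside p hp q hq ?_
        intro h; exact hab (by rw [h])
  have himg : (N.image (fun p => u (p + 1))).card = N.card :=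
    Finset.card_image_of_injOn (fun p _ q _ h => add_right_cancel (hu h))
  have hs0nimg : s₀ ∉ N.image (fun p => u (p + 1)) := by
    intro hmem
    obtain ⟨p, hp, hps⟩ := Finset.mem_image.mp hmem
    exact hs₀out ⟨p + 1, hps⟩
  have hWcard : W.card = N.card + 1 := by
    rw [hWdef, Finset.card_insert_of_notMem hs0nimg, himg]
  have hNle : N.card ≤ m' + 5 := by
    have := hα' _ hWpair
    omega
  have hNge : m' + 5 ≤ N.card := hs₀
  have hstep : ∃ p ∈ N, p + 2 ∉ N := by
    by_contra hcon
    push_neg at hcon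
    have hNpos : 0 < N.card := by omega
    obtain ⟨p₀, hp₀⟩ := Finset.card_pos.mp hNpos
    have hmem : ∀ t : ℕ, p₀ + ((2 * t : ℕ) : ZMod (n - 1)) ∈ N := by
      intro t
      induction t with
      | zero => simpa using hp₀
      | succ t ih =>
        have h2 := hcon _ ih
        have e : p₀ + ((2 * (t + 1) : ℕ) : ZMod (n - 1)) = p₀ + ((2 * t : ℕ) : ZMod (n - 1)) + 2 := by
          push_cast
          ring
        rw [e]
        exact h2
    have hsub : (Finset.range (m' + 6)).image (fun t : ℕ => p₀ + ((2 * t : ℕ) : ZMod (n - 1))) ⊆ N := by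
      intro z hz
      obtain ⟨t, _, rfl⟩ := Finset.mem_image.mp hz
      exact hmem t
    have hinj2 : Set.InjOn (fun t : ℕ => p₀ + ((2 * t : ℕ) : ZMod (n - 1)))
        (Finset.range (m' + 6)) := by
      intro t₁ h₁ t₂ h₂ he
      simp only [Finset.coe_range, Set.mem_Iio] at h₁ h₂
      have he' : ((2 * t₁ : ℕ) : ZMod (n - 1)) = ((2 * t₂ : ℕ) : ZMod (n - 1)) := add_left_cancel he
      have hmod : (2 * t₁) % (n - 1) = (2 * t₂) % (n - 1) := (ZMod.natCast_eq_natCast_iff _ _ _).mp he'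
      have hb1 : 2 * t₁ < n - 1 := by omega
      have hb2 : 2 * t₂ < n - 1 := by omega
      rw [Nat.mod_eq_of_lt hb1, Nat.mod_eq_of_lt hb2] at hmod
      omega
    have hle := Finset.card_le_card hsub
    rw [Finset.card_image_of_injOn hinj2, Finset.card_range] at hle
    omega
  obtain ⟨p, hpN, hp2⟩ := hstep
  set s₁ := f (p + 2) with hs₁def
  have hs₁S : s₁ ∈ S := hfS _
  have hs₁adj : G.Adj (u (p + 2)) s₁ := hfadj _
  have hs₁ne : s₁ ≠ s₀ := by
    intro h
    exact hp2 (Finset.mem_filter.mpr ⟨Finset.mem_univ _, h⟩)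
  have hs₁out : s₁ ∉ Set.range u := hSout _ hs₁S
  have hW' : ∃ q ∈ N, G.Adj s₁ (u (q + 1)) := by
    by_contra h
    push_neg at h
    have hs₁notW : s₁ ∉ W := by
      simp only [hWdef, Finset.mem_insert, Finset.mem_image]
      push_neg
      refine ⟨hs₁ne, fun q hq he => ?_⟩
      exact hs₁out ⟨q + 1, he⟩
    have hpair2 : ((insert s₁ W : Finset V) : Set V).Pairwise (fun a b => ¬ G.Adj a b) := by
      intro a ha b hb hab
      simp only [Finset.coe_insert, Set.mem_insert_iff, Finset.mem_coe] at ha hb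
      rcases ha with rfl | ha
      · rcases hb with rfl | hb
        · exact absurd rfl hab
        · rw [hWdef] at hb
          rcases Finset.mem_insert.mp hb with rfl | hb
          · exact hSind hs₁S hs₀S hs₁ne
          · obtain ⟨q, hq, rfl⟩ := Finset.mem_image.mp hb
            exact h q hq
      · rcases hb with rfl | hb
        · rw [hWdef] at ha
          rcases Finset.mem_insert.mp ha with rfl | ha
          · exact fun hadj => (hSind hs₁S hs₀S hs₁ne) hadj.symm
          · obtain ⟨q, hq, rfl⟩ := Finset.mem_image.mp ha
            exact fun hadj => h q hq hadj.symm
        · exact hWpair (Finset.mem_coe.mpr ha) (Finset.mem_coe.mpr hb) hab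
    have hc2 := hα' _ hpair2
    rw [Finset.card_insert_of_notMem hs₁notW] at hc2
    omega
  obtain ⟨q, hqN, hqadj⟩ := hW'
  by_cases hqp : q = p
  · subst hqp
    refine noTwoCons s₁ hs₁out (q + 1) hqadj ?_
    have e : q + 1 + 1 = q + 2 := by ring
    rw [e]
    exact hs₁adj.symm
  · by_cases hqp1 : q = p + 1
    · exact noTwoCons s₀ hs₀out p ((hNadj p hpN).symm) (hqp1 ▸ (hNadj q hqN).symm)
    · exact hno (consC G (n - 1) (by omega) u hu hcyc s₀ s₁ hs₀out hs₁out hs₁ne.symm q p hqp hqp1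
        ((hNadj q hqN).symm) ((hNadj p hpN).symm) hqadj hs₁adj.symm)
end

section
/- Let m ≥ 7 and n ≥ (m-3)(m-1). Let G be a C_n-free graph of order (m-1)(n-1) with independence number at most m-1, let C be a cycle of length n-1 in G, and suppose the induced subgraph of G on V(G) \ V(C) contains m-2 pairwise vertex-disjoint copies of K_{n-1} covering all of its (m-2)(n-1) vertices. Then the vertices of C induce a complete graph K_{n-1} in G; consequently G contains a spanning subgraph isomorphic to (m-1)K_{n-1}. -/
open SimpleGraph

private lemma exists_walk_aux {V : Type*} (G : SimpleGraph V) (l : List V) :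
    ∀ (a b : V), List.Chain G.Adj a (l ++ [b]) →
      ∃ w : G.Walk a b, w.support = a :: (l ++ [b]) ∧
        ∀ e ∈ w.edges, ∃ x y, e = s(x, y) ∧ [x, y] <:+: w.support := by
  induction l with
  | nil =>
    intro a b h
    rw [List.nil_append] at h
    change List.IsChain G.Adj [a, b] at h
    rw [List.isChain_cons_cons] at h
    refine ⟨Walk.cons h.1 Walk.nil, by simp, ?_⟩
    intro e he
    simp only [Walk.edges_cons, Walk.edges_nil, List.mem_singleton] at he
    exact ⟨a, b, he, by simp⟩
  | cons c l ih =>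
    intro a b h
    rw [List.cons_append] at h
    change List.IsChain G.Adj (a :: c :: (l ++ [b])) at h
    rw [List.isChain_cons_cons] at h
    obtain ⟨w, hs, he⟩ := ih c b h.2
    refine ⟨Walk.cons h.1 w, by simp [hs], ?_⟩
    intro e hme
    rw [Walk.edges_cons, List.mem_cons] at hme
    rcases hme with rfl | hme
    · exact ⟨a, c, rfl, by rw [Walk.support_cons, hs]; exact ⟨[], l ++ [b], rfl⟩⟩
    · obtain ⟨x, y, rfl, hinf⟩ := he e hme
      refine ⟨x, y, rfl, hinf.trans ?_⟩
      rw [Walk.support_cons]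
      exact (List.suffix_cons a w.support).isInfix

private lemma hasCycle_of_list {V : Type*} {G : SimpleGraph V} (a b : V) (l : List V)
    (hnd : (a :: (l ++ [b])).Nodup) (hl : l ≠ [])
    (hchain : List.Chain G.Adj a (l ++ [b])) (hba : G.Adj b a) :
    HasCycleOfLength G (l.length + 2) := by
  obtain ⟨w, hs, he⟩ := exists_walk_aux G l a b hchain
  have hanotin : a ∉ l ++ [b] := (List.nodup_cons.mp hnd).1
  have hab : a ≠ b := fun h => hanotin (by rw [h]; exact List.mem_append_right l (List.mem_singleton_self b))
  have hpath : w.IsPath := by rw [Walk.isPath_def, hs]; exact hnd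
  have hedge : s(b, a) ∉ w.edges := by
    intro hmem
    obtain ⟨x, y, hxy, hinf⟩ := he _ hmem
    obtain ⟨s, t, heq⟩ := hinf
    rw [hs] at heq
    rw [Sym2.eq_iff] at hxy
    rcases s with _ | ⟨a₀, s'⟩
    · rw [List.nil_append, List.cons_append, List.cons_append, List.nil_append] at heq
      injection heq with h1 heq'
      rcases hxy with ⟨hb, ha⟩ | ⟨hb, ha⟩
      · -- x = b (hb : b = x), y = a; h1 : x = a so a = b
        exact hab (h1 ▸ hb).symm
      · -- hb : b = y, ha : a = x ; heq' : y :: t = l ++ [b], i.e. b :: t = l ++ [b]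
        subst hb
        have h2 : b :: t = l ++ [b] := heq'
        have hbnotl : b ∉ l := by
          have hd := (List.nodup_append.mp (List.nodup_cons.mp hnd).2).2.2
          intro hbl; exact hd b hbl b (List.mem_singleton_self b) rfl
        rcases l with _ | ⟨c, l'⟩
        · exact hl rfl
        · rw [List.cons_append] at h2
          injection h2 with h3 _
          exact hbnotl (h3 ▸ (List.mem_cons_self : c ∈ c :: l'))
    · rw [List.cons_append, List.cons_append] at heq
      injection heq with h1 heq'
      have haxy : a ∈ [x, y] := by
        rcases hxy with ⟨hb, ha⟩ | ⟨hb, ha⟩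
        · rw [ha]; simp
        · rw [ha]; simp
      have hamem : a ∈ s' ++ ([x, y] ++ t) :=
        List.mem_append_right s' (List.mem_append_left t haxy)
      rw [← List.append_assoc] at hamem
      exact hanotin (heq' ▸ hamem)
  have hcyc : (Walk.cons hba w).IsCycle := (Walk.cons_isCycle_iff w hba).mpr ⟨hpath, hedge⟩
  have hlen1 : w.length + 1 = l.length + 2 := by
    rw [← Walk.length_support, hs]; simp
  refine ⟨b, Walk.cons hba w, hcyc, ?_⟩
  rw [Walk.length_cons]; omega

private lemma hasCycle_gen {V : Type*} {G : SimpleGraph V} (L : List V)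
    (h3 : 3 ≤ L.length) (hnd : L.Nodup) (hch : L.Chain' G.Adj)
    (hlast : ∀ x y : V, L.head? = some x → L.getLast? = some y → G.Adj y x) :
    HasCycleOfLength G L.length := by
  rcases L with _ | ⟨a, M⟩
  · simp at h3
  rcases List.eq_nil_or_concat M with rfl | ⟨l, b, rfl⟩
  · simp at h3
  simp only [List.concat_eq_append] at h3 hnd hch hlast ⊢
  have hchain : List.Chain G.Adj a (l ++ [b]) := hch
  have hba : G.Adj b a := by
    refine hlast a b rfl ?_
    have : a :: (l ++ [b]) = (a :: l) ++ [b] := rfl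
    rw [this, List.getLast?_concat]
  have hl : l ≠ [] := by
    intro h; subst h; simp at h3
  have := hasCycle_of_list a b l hnd hl hchain hba
  simpa using this


private lemma clique_path {V : Type*} {G : SimpleGraph V} {s : Finset V} {N : ℕ}
    (hs : G.IsNClique N s) {v w : V} (hv : v ∈ s) (hw : w ∈ s) (hvw : v ≠ w)
    (t : ℕ) (ht1 : 1 ≤ t) (ht2 : t + 1 ≤ N) :
    ∃ L : List V, L.length = t + 1 ∧ L.Nodup ∧ L.head? = some v ∧ L.getLast? = some w ∧
      (∀ x ∈ L, x ∈ s) ∧ L.Chain' G.Adj := by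
  classical
  have hcard : s.card = N := hs.2
  set M := (s.erase v).erase w with hM
  have hMcard : M.card = N - 2 := by
    rw [hM, Finset.card_erase_of_mem (Finset.mem_erase.mpr ⟨hvw.symm, hw⟩),
      Finset.card_erase_of_mem hv, hcard]
    omega
  set mid := M.toList.take (t - 1) with hmid
  have hmidlen : mid.length = t - 1 := by
    rw [hmid, List.length_take, Finset.length_toList, hMcard]
    omega
  have hmidsub : ∀ x ∈ mid, x ∈ M := fun x hx =>
    Finset.mem_toList.mp (List.mem_of_mem_take hx)
  have hmidnd : mid.Nodup := (List.take_sublist _ _).nodup M.nodup_toList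
  set L := v :: (mid ++ [w]) with hL
  have hLsub : ∀ x ∈ L, x ∈ s := by
    intro x hx
    rcases List.mem_cons.mp hx with rfl | hx
    · exact hv
    rcases List.mem_append.mp hx with hx | hx
    · exact Finset.mem_of_mem_erase (Finset.mem_of_mem_erase (hmidsub x hx))
    · rw [List.mem_singleton.mp hx]; exact hw
  have hLnd : L.Nodup := by
    rw [hL, List.nodup_cons]
    constructor
    · intro hmem
      rcases List.mem_append.mp hmem with hx | hx
      · exact (Finset.ne_of_mem_erase (Finset.mem_of_mem_erase (hmidsub v hx))) rfl
      · exact hvw (List.mem_singleton.mp hx)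
    · refine List.Nodup.append hmidnd (List.nodup_singleton w) ?_
      intro x hx hxw
      rw [List.mem_singleton.mp hxw] at hx
      exact (Finset.ne_of_mem_erase (hmidsub w hx)) rfl
  have hLlen : L.length = t + 1 := by
    rw [hL]; simp [hmidlen]; omega
  refine ⟨L, hLlen, hLnd, rfl, ?_, hLsub, ?_⟩
  · rw [hL]
    have : v :: (mid ++ [w]) = (v :: mid) ++ [w] := rfl
    rw [this, List.getLast?_concat]
  · have hpw : L.Pairwise G.Adj := by
      refine List.Pairwise.imp_of_mem ?_ hLnd
      intro x y hx hy hxy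
      exact hs.1 (hLsub x hx) (hLsub y hy) hxy
    exact hpw.isChain

private lemma arc_path {V : Type*} {G : SimpleGraph V} {N : ℕ} [NeZero N]
    (u : ZMod N → V) (hu : Function.Injective u)
    (hcyc : ∀ i, G.Adj (u i) (u (i + 1))) (b : ZMod N) (d : ℕ) (hd : d < N) :
    ∃ L : List V, L.length = d + 1 ∧ L.Nodup ∧ L.head? = some (u b) ∧
      L.getLast? = some (u (b + (d : ZMod N))) ∧ (∀ x ∈ L, x ∈ Set.range u) ∧
      L.Chain' G.Adj := by
  set L := (List.range (d + 1)).map (fun i : ℕ => u (b + (i : ZMod N))) with hL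
  refine ⟨L, by simp [hL], ?_, ?_, ?_, ?_, ?_⟩
  · refine List.Nodup.map_on ?_ List.nodup_range
    intro i hi j hj hij
    rw [List.mem_range] at hi hj
    have := hu hij
    have h2 : (i : ZMod N) = (j : ZMod N) := by
      have := add_left_cancel this
      exact this
    have hiv : ((i : ZMod N)).val = i := ZMod.val_cast_of_lt (by omega)
    have hjv : ((j : ZMod N)).val = j := ZMod.val_cast_of_lt (by omega)
    rw [← hiv, ← hjv, h2]
  · rw [hL]
    rw [List.range_succ_eq_map]
    simp
  · rw [hL, List.range_succ, List.map_append]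
    simp
  · intro x hx
    rw [hL, List.mem_map] at hx
    obtain ⟨i, _, rfl⟩ := hx
    exact Set.mem_range_self _
  · rw [hL]
    unfold List.Chain'
    rw [List.isChain_map]
    have := List.isChain_range_succ (fun i j : ℕ => G.Adj (u (b + (i : ZMod N))) (u (b + (j : ZMod N)))) d
    rw [this]
    intro i hi
    have : (b + (i : ZMod N)) + 1 = b + ((i + 1 : ℕ) : ZMod N) := by push_cast; ring
    have h := hcyc (b + (i : ZMod N))
    rwa [this] at h

private lemma core_cycle {V : Type*} {G : SimpleGraph V} {N : ℕ} [NeZero N]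
    (hN : 23 ≤ N)
    (u : ZMod N → V) (hu : Function.Injective u)
    (hcyc : ∀ i, G.Adj (u i) (u (i + 1)))
    (hno : ¬ HasCycleOfLength G (N + 1))
    {s : Finset V} (hs : G.IsNClique N s) (hsout : ∀ x ∈ s, x ∉ Set.range u)
    {v w : V} (a b : ZMod N) (hv : v ∈ s) (hw : w ∈ s) (hvw : v ≠ w)
    (hav : G.Adj (u a) v) (hwb : G.Adj w (u b)) (hd : (a - b).val ≤ N - 2) : False := by
  set d := (a - b).val with hdd
  have hdN : d < N := ZMod.val_lt _
  set t := N - 1 - d with ht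
  obtain ⟨L₁, h1len, h1nd, h1hd, h1lst, h1sub, h1ch⟩ := arc_path u hu hcyc b d hdN
  obtain ⟨L₂, h2len, h2nd, h2hd, h2lst, h2sub, h2ch⟩ :=
    clique_path hs hv hw hvw t (by omega) (by omega)
  have hba : b + (d : ZMod N) = a := by
    rw [hdd, ZMod.natCast_rightInverse (a - b)]
    ring
  rw [hba] at h1lst
  set L := L₁ ++ L₂ with hL
  have hlen : L.length = N + 1 := by rw [hL, List.length_append]; omega
  have hnd : L.Nodup := by
    refine List.Nodup.append h1nd h2nd ?_
    intro x hx1 hx2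
    exact hsout x (h2sub x hx2) (h1sub x hx1)
  have hch : L.Chain' G.Adj := by
    refine List.IsChain.append h1ch h2ch ?_
    intro x hx y hy
    rw [h1lst, Option.mem_some_iff] at hx
    rw [h2hd, Option.mem_some_iff] at hy
    rw [← hx, ← hy]
    exact hav
  have hlast : ∀ x y : V, L.head? = some x → L.getLast? = some y → G.Adj y x := by
    intro x y hx hy
    rw [hL, List.head?_append, h1hd] at hx
    rw [show (some (u b)).or L₂.head? = some (u b) from rfl, Option.some_inj] at hx
    rw [hL, List.getLast?_append, h2lst] at hy
    rw [show (some w).or L₁.getLast? = some w from rfl, Option.some_inj] at hy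
    rw [← hx, ← hy]
    exact hwb
  have := hasCycle_gen L (by omega) hnd hch hlast
  rw [hlen] at this
  exact hno this

private lemma no_two_cycle_nbrs {V : Type*} {G : SimpleGraph V} {N : ℕ} [NeZero N]
    (hN : 23 ≤ N)
    (u : ZMod N → V) (hu : Function.Injective u)
    (hcyc : ∀ i, G.Adj (u i) (u (i + 1)))
    (hno : ¬ HasCycleOfLength G (N + 1))
    {s : Finset V} (hs : G.IsNClique N s) (hsout : ∀ x ∈ s, x ∉ Set.range u)
    {v w : V} (a b : ZMod N) (hv : v ∈ s) (hw : w ∈ s) (hvw : v ≠ w)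
    (hav : G.Adj v (u a)) (hwb : G.Adj w (u b)) : False := by
  by_cases hd : (a - b).val ≤ N - 2
  · exact core_cycle hN u hu hcyc hno hs hsout a b hv hw hvw hav.symm hwb hd
  · have h1 : (a - b).val = N - 1 := by have := ZMod.val_lt (a - b); omega
    have h2 : (b - a).val ≤ N - 2 := by
      have hne : a - b ≠ 0 := by
        intro h; rw [h, ZMod.val_zero] at h1; omega
      have : b - a = -(a - b) := by ring
      rw [this, ZMod.neg_val, if_neg hne, h1]
      omega
    exact core_cycle hN u hu hcyc hno hs hsout b a hw hv hvw.symm hwb.symm hav h2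

private lemma at_most_one_nbr {V : Type*} {G : SimpleGraph V} {N : ℕ}
    (hN : 23 ≤ N) (hno : ¬ HasCycleOfLength G (N + 1))
    {s t : Finset V} (hs : G.IsNClique N s) (ht : G.IsNClique N t) (hst : Disjoint s t)
    {v w w' : V} (hv : v ∈ s) (hw : w ∈ t) (hw' : w' ∈ t) (hww' : w ≠ w')
    (hvw : G.Adj v w) (hvw' : G.Adj v w') : False := by
  obtain ⟨L₂, h2len, h2nd, h2hd, h2lst, h2sub, h2ch⟩ :=
    clique_path ht hw hw' hww' (N - 1) (by omega) (by omega)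
  set L := v :: L₂ with hL
  have hvnot : v ∉ L₂ := by
    intro hmem
    exact (Finset.disjoint_left.mp hst hv) (h2sub v hmem)
  have hnd : L.Nodup := List.nodup_cons.mpr ⟨hvnot, h2nd⟩
  have hch : L.Chain' G.Adj := by
    rw [hL]
    unfold List.Chain'
    rw [List.isChain_cons]
    refine ⟨?_, h2ch⟩
    intro y hy
    rw [h2hd, Option.mem_some_iff] at hy
    rw [← hy]; exact hvw
  have hlast : ∀ x y : V, L.head? = some x → L.getLast? = some y → G.Adj y x := by
    intro x y hx hy
    rw [hL] at hx hy
    rw [List.head?_cons, Option.some_inj] at hx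
    rcases L₂ with _ | ⟨c, L₂'⟩
    · simp at h2len
    rw [List.getLast?_cons_cons, h2lst, Option.some_inj] at hy
    rw [← hx, ← hy]
    exact hvw'.symm
  have hlen : L.length = N + 1 := by rw [hL, List.length_cons]; omega
  have := hasCycle_gen L (by omega) hnd hch hlast
  rw [hlen] at this
  exact hno this

/-- Let `m ≥ 7` and `n ≥ (m-3)(m-1)`.  Let `G` be a `C_n`-free graph of order
`(m-1)(n-1)` with independence number at most `m-1`, let `C` be a cycle of length `n-1`
in `G` (encoded by an injective `u : ZMod (n-1) → V` with consecutive vertices adjacent),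
and suppose the induced subgraph of `G` on `V(G) \ V(C)` contains `m-2` pairwise
vertex-disjoint copies of `K_{n-1}` covering all of its `(m-2)(n-1)` vertices.  Then the
vertices of `C` induce a complete graph `K_{n-1}` in `G`; consequently `G` contains a
spanning subgraph isomorphic to `(m-1)K_{n-1}`. -/
theorem cycle_induces_clique_of_partition_outside (m n : ℕ) (hm : 7 ≤ m)
    (hn : (m - 3) * (m - 1) ≤ n)
    {V : Type*} [Fintype V] (G : SimpleGraph V)
    (hcard : Fintype.card V = (m - 1) * (n - 1))
    (hno : ¬ HasCycleOfLength G n)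
    (hα : ∀ s : Finset V, (s : Set V).Pairwise (fun a b => ¬ G.Adj a b) → s.card ≤ m - 1)
    (u : ZMod (n - 1) → V) (hu : Function.Injective u)
    (hcyc : ∀ i : ZMod (n - 1), G.Adj (u i) (u (i + 1)))
    (f : Fin (m - 2) → Finset V)
    (hclique : ∀ i, G.IsNClique (n - 1) (f i))
    (hdisj : ∀ i j, i ≠ j → Disjoint (f i) (f j))
    (hout : ∀ i, ∀ v ∈ f i, v ∉ Set.range u)
    (hcover : ∀ v : V, v ∉ Set.range u → ∃ i, v ∈ f i) :
    (∀ i j : ZMod (n - 1), u i ≠ u j → G.Adj (u i) (u j)) ∧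
    ∃ g : Fin (m - 1) → Finset V,
      (∀ i, G.IsNClique (n - 1) (g i)) ∧
      (∀ i j, i ≠ j → Disjoint (g i) (g j)) ∧
      (∀ v : V, ∃ i, v ∈ g i) := by
  classical
  have hn24 : 24 ≤ n := by
    have h1 : 4 ≤ m - 3 := by omega
    have h2 : 6 ≤ m - 1 := by omega
    have := Nat.mul_le_mul h1 h2
    omega
  have hmn : m + 17 ≤ n := by
    have h1 : 4 * (m - 1) ≤ (m - 3) * (m - 1) := Nat.mul_le_mul_right _ (by omega)
    omega
  haveI : NeZero (n - 1) := ⟨by omega⟩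
  have hN : 23 ≤ n - 1 := by omega
  have hno' : ¬ HasCycleOfLength G ((n - 1) + 1) := by
    have heq : (n - 1) + 1 = n := by omega
    rw [heq]; exact hno
  have lemA : ∀ (k : Fin (m - 2)) (v w : V) (a b : ZMod (n - 1)), v ∈ f k → w ∈ f k →
      v ≠ w → G.Adj v (u a) → G.Adj w (u b) → False := fun k v w a b hv hw hvw h1 h2 =>
    no_two_cycle_nbrs hN u hu hcyc hno' (hclique k) (hout k) a b hv hw hvw h1 h2
  have lemB : ∀ (k l : Fin (m - 2)), k ≠ l → ∀ (v w w' : V), v ∈ f k → w ∈ f l →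
      w' ∈ f l → w ≠ w' → G.Adj v w → G.Adj v w' → False :=
    fun k l hkl v w w' hv hw hw' hww' h1 h2 =>
    at_most_one_nbr hN hno' (hclique k) (hclique l) (hdisj k l hkl) hv hw hw' hww' h1 h2
  have hfcard : ∀ k, (f k).card = n - 1 := fun k => (hclique k).2
  have greedy : ∀ K : ℕ, K ≤ m - 2 → ∃ x : Fin (m - 2) → V,
      ∀ i : Fin (m - 2), (i : ℕ) < K → x i ∈ f i ∧
        (∀ a : ZMod (n - 1), ¬ G.Adj (x i) (u a)) ∧
        ∀ j : Fin (m - 2), (j : ℕ) < K → j ≠ i → ¬ G.Adj (x i) (x j) := by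
    intro K
    induction K with
    | zero =>
      intro _
      have hne : ∀ i : Fin (m - 2), (f i).Nonempty := fun i =>
        Finset.card_pos.mp (by rw [hfcard]; omega)
      exact ⟨fun i => (hne i).choose, fun i hi => absurd hi (by omega)⟩
    | succ K ih =>
      intro hK
      obtain ⟨x, hx⟩ := ih (by omega)
      have hKlt : K < m - 2 := hK
      set k : Fin (m - 2) := ⟨K, hKlt⟩ with hk
      set Bad : Finset V := (f k).filter
        (fun y => (∃ a : ZMod (n - 1), G.Adj y (u a)) ∨
          ∃ j : Fin (m - 2), (j : ℕ) < K ∧ G.Adj (x j) y) with hBadDef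
      have h1 : ((f k).filter (fun y => ∃ a : ZMod (n - 1), G.Adj y (u a))).card ≤ 1 := by
        rw [Finset.card_le_one]
        intro v hv w hw
        rw [Finset.mem_filter] at hv hw
        obtain ⟨hvf, a, hva⟩ := hv
        obtain ⟨hwf, b, hwb⟩ := hw
        by_contra hne
        exact lemA k v w a b hvf hwf hne hva hwb
      have h2 : ∀ j : Fin (m - 2), (j : ℕ) < K →
          ((f k).filter (fun y => G.Adj (x j) y)).card ≤ 1 := by
        intro j hj
        rw [Finset.card_le_one]
        intro v hv w hw
        rw [Finset.mem_filter] at hv hw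
        by_contra hne
        have hjk : j ≠ k := by
          intro h
          rw [h] at hj
          simp only [hk] at hj
          omega
        exact lemB j k hjk (x j) v w (hx j (by omega)).1 hv.1 hw.1 hne hv.2 hw.2
      have hBadcard : Bad.card ≤ 1 + K := by
        have hsub : Bad ⊆ (f k).filter (fun y => ∃ a : ZMod (n - 1), G.Adj y (u a)) ∪
            (Finset.univ.filter (fun j : Fin (m - 2) => (j : ℕ) < K)).biUnion
              (fun j => (f k).filter (fun y => G.Adj (x j) y)) := by
          intro y hy
          rw [hBadDef, Finset.mem_filter] at hy
          obtain ⟨hyf, hcase⟩ := hy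
          rcases hcase with h | ⟨j, hj1, hj2⟩
          · exact Finset.mem_union_left _ (Finset.mem_filter.mpr ⟨hyf, h⟩)
          · exact Finset.mem_union_right _ (Finset.mem_biUnion.mpr
              ⟨j, Finset.mem_filter.mpr ⟨Finset.mem_univ _, hj1⟩,
                Finset.mem_filter.mpr ⟨hyf, hj2⟩⟩)
        have h5 : (Finset.univ.filter (fun j : Fin (m - 2) => (j : ℕ) < K)).card ≤ K := by
          have := Finset.card_le_card_of_injOn
            (s := Finset.univ.filter (fun j : Fin (m - 2) => (j : ℕ) < K))
            (t := Finset.range K) (fun j : Fin (m - 2) => (j : ℕ))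
            (fun j hj => Finset.mem_range.mpr (Finset.mem_filter.mp hj).2)
            (fun j _ j' _ h => Fin.ext h)
          rwa [Finset.card_range] at this
        have h6 : ((Finset.univ.filter (fun j : Fin (m - 2) => (j : ℕ) < K)).biUnion
            (fun j => (f k).filter (fun y => G.Adj (x j) y))).card ≤ K := by
          refine le_trans (Finset.card_biUnion_le) (le_trans ?_ h5)
          calc ∑ j ∈ Finset.univ.filter (fun j : Fin (m - 2) => (j : ℕ) < K),
                ((f k).filter (fun y => G.Adj (x j) y)).card
              ≤ ∑ _j ∈ Finset.univ.filter (fun j : Fin (m - 2) => (j : ℕ) < K), 1 :=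
                Finset.sum_le_sum (fun j hj => h2 j (Finset.mem_filter.mp hj).2)
            _ = _ := by rw [Finset.sum_const, smul_eq_mul, mul_one]
        calc Bad.card ≤ _ := Finset.card_le_card hsub
          _ ≤ _ + _ := Finset.card_union_le _ _
          _ ≤ 1 + K := by omega
      obtain ⟨y, hyf, hyBad⟩ : ∃ y ∈ f k, y ∉ Bad := by
        by_contra h
        push_neg at h
        have hsub : f k ⊆ Bad := h
        have := Finset.card_le_card hsub
        have := hfcard k
        omega
      refine ⟨Function.update x k y, ?_⟩
      intro i hi
      by_cases hik : i = k
      · subst hik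
        rw [Function.update_self]
        refine ⟨hyf, ?_, ?_⟩
        · intro a hadj
          exact hyBad (Finset.mem_filter.mpr ⟨hyf, Or.inl ⟨a, hadj⟩⟩)
        · intro j hj hji
          rw [Function.update_of_ne hji]
          intro hadj
          have hj' : (j : ℕ) < K := by
            have : (j : ℕ) ≠ K := fun h => hji (Fin.ext h)
            omega
          exact hyBad (Finset.mem_filter.mpr ⟨hyf, Or.inr ⟨j, hj', hadj.symm⟩⟩)
      · have hi' : (i : ℕ) < K := by
          have : (i : ℕ) ≠ K := fun h => hik (Fin.ext h)
          omega
        obtain ⟨hm1, hm2, hm3⟩ := hx i hi'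
        rw [Function.update_of_ne hik]
        refine ⟨hm1, hm2, ?_⟩
        intro j hj hji
        by_cases hjk : j = k
        · subst hjk
          rw [Function.update_self]
          intro hadj
          exact hyBad (Finset.mem_filter.mpr ⟨hyf, Or.inr ⟨i, hi', hadj⟩⟩)
        · rw [Function.update_of_ne hjk]
          have hj' : (j : ℕ) < K := by
            have : (j : ℕ) ≠ K := fun h => hjk (Fin.ext h)
            omega
          exact hm3 j hj' hji
  have part1 : ∀ a b : ZMod (n - 1), u a ≠ u b → G.Adj (u a) (u b) := by
    intro a b hab
    by_contra hnadj
    obtain ⟨x, hx⟩ := greedy (m - 2) le_rfl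
    have hx' := fun i : Fin (m - 2) => hx i i.isLt
    have hxinj : Function.Injective x := by
      intro i j hij
      by_contra hne
      have h1 : x j ∈ f i := hij ▸ (hx' i).1
      exact (Finset.disjoint_left.mp (hdisj i j hne) h1) (hx' j).1
    have hxnotu : ∀ (i : Fin (m - 2)) (c : ZMod (n - 1)), x i ≠ u c := by
      intro i c h
      exact hout i (x i) (hx' i).1 ⟨c, h.symm⟩
    have hcycadj : ∀ (i : Fin (m - 2)) (c : ZMod (n - 1)), ¬ G.Adj (x i) (u c) :=
      fun i => (hx' i).2.1
    have hxx : ∀ i j : Fin (m - 2), x i ≠ x j → ¬ G.Adj (x i) (x j) := by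
      intro i j hne
      have hij : j ≠ i := fun h => hne (h ▸ rfl)
      exact (hx' i).2.2 j j.isLt hij
    set T : Finset V := insert (u a) (insert (u b) (Finset.univ.image x)) with hT
    have hTpair : (T : Set V).Pairwise (fun p q => ¬ G.Adj p q) := by
      intro p hp q hq hpq
      have hmem : ∀ r ∈ (T : Set V), r = u a ∨ r = u b ∨ ∃ i, x i = r := by
        intro r hr
        simp only [hT, Finset.coe_insert, Set.mem_insert_iff, Finset.coe_image,
          Set.mem_image, Finset.mem_coe, Finset.mem_univ] at hr
        rcases hr with h | h | ⟨i, _, h⟩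
        · exact Or.inl h
        · exact Or.inr (Or.inl h)
        · exact Or.inr (Or.inr ⟨i, h⟩)
      rcases hmem p hp with rfl | rfl | ⟨i, rfl⟩ <;>
        rcases hmem q hq with rfl | rfl | ⟨j, rfl⟩
      · exact absurd rfl hpq
      · exact hnadj
      · exact fun h => hcycadj j _ h.symm
      · exact fun h => hnadj h.symm
      · exact absurd rfl hpq
      · exact fun h => hcycadj j _ h.symm
      · exact hcycadj i a
      · exact hcycadj i b
      · exact hxx i j hpq
    have hTcard : T.card = m := by
      have himg : (Finset.univ.image x).card = m - 2 := by
        rw [Finset.card_image_of_injective _ hxinj, Finset.card_univ, Fintype.card_fin]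
      have hb : u b ∉ Finset.univ.image x := by
        intro h
        rw [Finset.mem_image] at h
        obtain ⟨i, _, h⟩ := h
        exact hxnotu i b h
      have ha : u a ∉ insert (u b) (Finset.univ.image x) := by
        intro h
        rcases Finset.mem_insert.mp h with h | h
        · exact hab h
        · rw [Finset.mem_image] at h
          obtain ⟨i, _, h⟩ := h
          exact hxnotu i a h
      rw [hT, Finset.card_insert_of_notMem ha, Finset.card_insert_of_notMem hb, himg]
      omega
    have := hα T hTpair
    omega
  refine ⟨part1, ?_⟩
  set C : Finset V := Finset.univ.image u with hC
  have hCclique : G.IsNClique (n - 1) C := by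
    constructor
    · intro p hp q hq hpq
      rw [hC, Finset.coe_image] at hp hq
      obtain ⟨i, _, rfl⟩ := hp
      obtain ⟨j, _, rfl⟩ := hq
      exact part1 i j hpq
    · rw [hC, Finset.card_image_of_injective _ hu, Finset.card_univ, ZMod.card]
  refine ⟨fun i => if h : (i : ℕ) = 0 then C
      else f ⟨(i : ℕ) - 1, by have := i.isLt; omega⟩, ?_, ?_, ?_⟩
  · intro i
    beta_reduce
    by_cases h : (i : ℕ) = 0
    · rw [dif_pos h]; exact hCclique
    · rw [dif_neg h]; exact hclique _
  · intro i j hij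
    beta_reduce
    by_cases hi : (i : ℕ) = 0 <;> by_cases hj : (j : ℕ) = 0
    · exact absurd (Fin.ext (hi.trans hj.symm)) hij
    · rw [dif_pos hi, dif_neg hj]
      rw [Finset.disjoint_left]
      intro p hp hpf
      rw [hC, Finset.mem_image] at hp
      obtain ⟨c, _, rfl⟩ := hp
      exact hout _ _ hpf ⟨c, rfl⟩
    · rw [dif_neg hi, dif_pos hj]
      rw [Finset.disjoint_right]
      intro p hp hpf
      rw [hC, Finset.mem_image] at hp
      obtain ⟨c, _, rfl⟩ := hp
      exact hout _ _ hpf ⟨c, rfl⟩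
    · rw [dif_neg hi, dif_neg hj]
      refine hdisj _ _ ?_
      intro h
      apply hij
      have := congrArg Fin.val h
      simp only at this
      exact Fin.ext (by omega)
  · intro v
    by_cases hv : v ∈ Set.range u
    · obtain ⟨c, rfl⟩ := hv
      refine ⟨⟨0, by omega⟩, ?_⟩
      beta_reduce
      rw [dif_pos rfl]
      exact Finset.mem_image.mpr ⟨c, Finset.mem_univ _, rfl⟩
    · obtain ⟨k, hk⟩ := hcover v hv
      refine ⟨⟨(k : ℕ) + 1, by have := k.isLt; omega⟩, ?_⟩
      beta_reduce
      rw [dif_neg (by simp)]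
      have heq : (⟨(k : ℕ) + 1 - 1, by have := k.isLt; omega⟩ : Fin (m - 2)) = k :=
        Fin.ext (by simp)
      rw [heq]
      exact hk
end
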